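/- arXiv:1905.08001 — 2 statements merged into one kernel-verified Lean document; each statement's English description precedes it below -/
import Mathlib

section
/- Let F be a multigraph with t vertices, let k ≥ 1 be an integer, and let H = F^{2k-1}. Let K, δ > 0 and let G be a graph with maximum degree at most Kδ that does not contain H as a subgraph. Let r = R_k(t) be the k-colour Ramsey number of t. Then for every vertex v of G, the auxiliary graph 𝒢(v) (with richness parameters k, h = |V(H)|, K, δ) contains no clique on r vertices. -/
open SimpleGraph

variable {V : Type*} [Fintype V] [DecidableEq V]

/-- The restriction of `p : ℕ → V` to `[0, ℓ]` is a path in `G`: consecutive vertices are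
adjacent and all vertices `p 0, …, p ℓ` are distinct. -/
def PathSeq (G : SimpleGraph V) (ℓ : ℕ) (p : ℕ → V) : Prop :=
  (∀ i, i < ℓ → G.Adj (p i) (p (i + 1))) ∧
  ∀ i j, i < j → j ≤ ℓ → p i ≠ p j

/-- `p` is padded beyond index `ℓ`; used so that each finite sequence corresponds to a
unique function `ℕ → V` when counting. -/
def PadSeq (ℓ : ℕ) (p : ℕ → V) : Prop := ∀ i, ℓ ≤ i → p i = p ℓ

/-- `f(ℓ, L) = L^(5^ℓ)`. -/
noncomputable def fBound (ℓ : ℕ) (L : ℝ) : ℝ := L ^ (5 ^ ℓ)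

/-- The recursive notion of an `L`-good path of length `ℓ` (as a sequence `p 0, …, p ℓ`):
`p` is a path, every proper subpath is `L`-good, and the number of `L`-admissible paths of
length `ℓ` from `p 0` to `p ℓ` is at most `f(ℓ, L)`. -/
def Good (G : SimpleGraph V) (L : ℝ) (ℓ : ℕ) (p : ℕ → V) : Prop :=
  (PathSeq G ℓ p ∧
    ∀ i j, i < j → j ≤ ℓ → ¬(i = 0 ∧ j = ℓ) → Good G L (j - i) (fun a => p (i + a))) ∧
  (Set.ncard {q : ℕ → V | q 0 = p 0 ∧ q ℓ = p ℓ ∧ PadSeq ℓ q ∧ PathSeq G ℓ q ∧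
      ∀ i j, i < j → j ≤ ℓ → ¬(i = 0 ∧ j = ℓ) → Good G L (j - i) (fun a => q (i + a))} : ℝ)
    ≤ fBound ℓ L
termination_by ℓ
decreasing_by all_goals omega

/-- `L`-admissible: a path all of whose proper subpaths are `L`-good. -/
def Admissible (G : SimpleGraph V) (L : ℝ) (ℓ : ℕ) (p : ℕ → V) : Prop :=
  PathSeq G ℓ p ∧
    ∀ i j, i < j → j ≤ ℓ → ¬(i = 0 ∧ j = ℓ) → Good G L (j - i) (fun a => p (i + a))

/-- There exist `N` pairwise internally vertex-disjoint paths of length `m` from `x` to `y`. -/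
def ManyDisjointPaths (G : SimpleGraph V) (m : ℕ) (x y : V) (N : ℕ) : Prop :=
  ∃ P : Fin N → (ℕ → V),
    (∀ a, PathSeq G m (P a) ∧ P a 0 = x ∧ P a m = y) ∧
    (∀ a b, a ≠ b → ∃ i, i ≤ m ∧ P a i ≠ P b i) ∧
    ∀ a b, a ≠ b → ∀ i j, 0 < i → i < m → 0 < j → j < m → P a i ≠ P b j

/-- A pair `(x, y)` of distinct vertices is `(i,j)`-rich (with parameters `k`, `h`, `K`, `δ`). -/
def Rich (G : SimpleGraph V) (k h : ℕ) (K δ : ℝ) (i j : ℕ) (x y : V) : Prop :=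
  x ≠ y ∧
  ((2 * (i + j) * h * (2 * k + 1) + 2 * (i + 1) * j : ℕ) : ℝ) *
      (K * δ) ^ ((i : ℤ) + (j : ℤ) - 1) <
    (Set.ncard {PQ : (ℕ → V) × (ℕ → V) |
      PathSeq G i PQ.1 ∧ PQ.1 0 = x ∧ PadSeq i PQ.1 ∧
      PathSeq G j PQ.2 ∧ PQ.2 0 = y ∧ PadSeq j PQ.2 ∧
      ManyDisjointPaths G (2 * k - i - j) (PQ.1 i) (PQ.2 j) ((h + 2) * (2 * k + 1) + 1)} : ℝ)

/-- `(x, y)` is an `(ℓ, L)`-bad pair: there is an `L`-admissible but not `L`-good path of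
length `ℓ` from `x` to `y`. -/
def Bad (G : SimpleGraph V) (L : ℝ) (ℓ : ℕ) (x y : V) : Prop :=
  ∃ p : ℕ → V, p 0 = x ∧ p ℓ = y ∧ Admissible G L ℓ p ∧ ¬ Good G L ℓ p

/-- `G` contains the `(s-1)`-subdivision of the multigraph on `Fin t` with multiplicity
function `m` as a subgraph: each parallel edge between `a < b` is replaced by a path of
length `s`, these paths being pairwise internally vertex-disjoint, with internal vertices
distinct from all branch vertices. -/
def ContainsMultiSubdiv (G : SimpleGraph V) (t : ℕ) (m : Fin t → Fin t → ℕ) (s : ℕ) : Prop :=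
  ∃ (φ : Fin t → V) (π : (a : Fin t) → (b : Fin t) → Fin (m a b) → (ℕ → V)),
    Function.Injective φ ∧
    (∀ a b, a < b → ∀ c, PathSeq G s (π a b c) ∧ π a b c 0 = φ a ∧ π a b c s = φ b) ∧
    (∀ a b, a < b → ∀ c, ∀ i, 0 < i → i < s → ∀ d, π a b c i ≠ φ d) ∧
    (∀ a b, a < b → ∀ a' b', a' < b' → ∀ (c : Fin (m a b)) (c' : Fin (m a' b')),
      (a, b, (c : ℕ)) ≠ (a', b', (c' : ℕ)) →
      ∀ i i', 0 < i → i < s → 0 < i' → i' < s → π a b c i ≠ π a' b' c' i')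

/-- The number of vertices of `H = F^{2k-1}` where `F` is the multigraph on `Fin t` with
multiplicity function `m`: the `t` branch vertices plus `2k - 1` internal vertices for each
edge (counted with multiplicity). -/
def nH (t k : ℕ) (m : Fin t → Fin t → ℕ) : ℕ :=
  t + (2 * k - 1) * ∑ p : Fin t × Fin t, if p.1 < p.2 then m p.1 p.2 else 0

/-- The minimum degree of `G`. -/
noncomputable def minDeg (G : SimpleGraph V) : ℕ :=
  sInf {d | ∃ v, (G.neighborSet v).ncard = d}

/-- The maximum degree of `G`. -/
noncomputable def maxDeg (G : SimpleGraph V) : ℕ :=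
  sSup {d | ∃ v, (G.neighborSet v).ncard = d}

/-- Adjacency in the auxiliary graph `𝒢_ℓ(v)`: the `2k+1` vertices `u 0 = v, u 1, …, u k,
u' 1, …, u' k` are all distinct and there exist `0 ≤ i, j ≤ k-1` such that the pair
`(u ℓ, u' ℓ)` is `(i,j)`-rich (symmetrised so that this defines a graph). -/
def AuxAdj (G : SimpleGraph V) (k h : ℕ) (K δ : ℝ) (ℓ : Fin (k + 1))
    (u u' : Fin (k + 1) → V) : Prop :=
  Function.Injective u ∧ Function.Injective u' ∧
  (∀ a b : Fin (k + 1), a ≠ 0 → b ≠ 0 → u a ≠ u' b) ∧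
  ∃ i j : ℕ, i < k ∧ j < k ∧
    (Rich G k h K δ i j (u ℓ) (u' ℓ) ∨ Rich G k h K δ i j (u' ℓ) (u ℓ))

/-- `r` satisfies the `k`-colour Ramsey property for `t`: every `k`-colouring of the edges of
the complete graph on `r` vertices contains a monochromatic complete graph on `t` vertices. -/
def RamseyProp (k t r : ℕ) : Prop :=
  ∀ χ : Fin r → Fin r → Fin k, (∀ a b, χ a b = χ b a) →
    ∃ (col : Fin k) (s : Finset (Fin r)), s.card = t ∧
      ∀ a ∈ s, ∀ b ∈ s, a ≠ b → χ a b = col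

set_option linter.unusedSectionVars false
set_option maxHeartbeats 1000000



lemma ncard_prod' {α β : Type*} (s : Set α) (t : Set β) : (s ×ˢ t).ncard = s.ncard * t.ncard := by
  simp only [← Nat.card_coe_set_eq]
  rw [Nat.card_congr (Equiv.Set.prod s t), Nat.card_prod]

lemma ncard_biUnion_le' {α ι : Type*} (F : Finset ι) (f : ι → Set α) :
    (⋃ i ∈ F, f i).ncard ≤ ∑ i ∈ F, (f i).ncard := by
  classical
  induction F using Finset.induction with
  | empty => simp
  | insert _ _ ha ih =>
    rename_i a F
    rw [Finset.set_biUnion_insert, Finset.sum_insert ha]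
    exact le_trans (Set.ncard_union_le _ _) (by omega)

lemma fib_bound {α β : Type*} (A : Set α) (hA : A.Finite) :
    ∀ (S : Set (α × β)) (C : ℝ), 0 ≤ C → (∀ p ∈ S, p.1 ∈ A) →
    (∀ a : α, {b | (a, b) ∈ S}.Finite) →
    (∀ a : α, (({b | (a, b) ∈ S}.ncard : ℝ)) ≤ C) →
    ((S.ncard : ℝ)) ≤ (A.ncard : ℝ) * C := by
  refine Set.Finite.induction_on (motive := fun A _ => ∀ (S : Set (α × β)) (C : ℝ), 0 ≤ C → (∀ p ∈ S, p.1 ∈ A) →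
    (∀ a : α, {b | (a, b) ∈ S}.Finite) →
    (∀ a : α, (({b | (a, b) ∈ S}.ncard : ℝ)) ≤ C) →
    ((S.ncard : ℝ)) ≤ (A.ncard : ℝ) * C) A hA ?_ ?_
  · intro S C hC h1 _ _
    have : S = ∅ := by
      ext p; simp only [Set.mem_empty_iff_false, iff_false]
      intro hp; exact h1 p hp
    simp [this]
  · intro a s' ha hs' ih S C hC h1 hf2 hf3
    have hsub : S ⊆ ({a} ×ˢ {b | (a, b) ∈ S}) ∪ {p ∈ S | p.1 ≠ a} := by
      intro p hp
      by_cases h : p.1 = a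
      · left; exact ⟨h, by rw [← h]; exact hp⟩
      · right; exact ⟨hp, h⟩
    have hfin : ({a} ×ˢ {b | (a, b) ∈ S} ∪ {p ∈ S | p.1 ≠ a}).Finite := by
      apply Set.Finite.union
      · exact Set.Finite.prod (Set.finite_singleton a) (hf2 a)
      · have : {p ∈ S | p.1 ≠ a} ⊆ ⋃ x ∈ s', {x} ×ˢ {b | (x, b) ∈ S} := by
          rintro ⟨u, v⟩ ⟨hp, hne⟩
          have := h1 _ hp
          simp only [Set.mem_insert_iff] at this
          rcases this with h | h
          · exact absurd h hne
          · exact Set.mem_biUnion h ⟨rfl, hp⟩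
        exact Set.Finite.subset (Set.Finite.biUnion hs' (fun x _ => Set.Finite.prod (Set.finite_singleton x) (hf2 x))) this
    have h2 : (S.ncard : ℝ) ≤ (({a} ×ˢ {b | (a, b) ∈ S}).ncard : ℝ) + (({p ∈ S | p.1 ≠ a}).ncard : ℝ) := by
      have := Set.ncard_le_ncard hsub hfin
      have := Set.ncard_union_le ({a} ×ˢ {b | (a, b) ∈ S}) {p ∈ S | p.1 ≠ a}
      push_cast
      exact_mod_cast le_trans (by exact_mod_cast Set.ncard_le_ncard hsub hfin) (by exact_mod_cast this)
    have h3 : (({a} ×ˢ {b | (a, b) ∈ S}).ncard : ℝ) ≤ C := by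
      rw [ncard_prod', Set.ncard_singleton, one_mul]
      exact hf3 a
    have h4 : (({p ∈ S | p.1 ≠ a}).ncard : ℝ) ≤ (s'.ncard : ℝ) * C := by
      apply ih _ C hC
      · rintro p ⟨hp, hne⟩
        have := h1 p hp
        simp only [Set.mem_insert_iff] at this
        tauto
      · intro x
        apply Set.Finite.subset (hf2 x)
        intro b hb
        exact hb.1
      · intro x
        have hsub2 : {b | (x, b) ∈ {p | p ∈ S ∧ p.1 ≠ a}} ⊆ {b | (x, b) ∈ S} := by
          intro b hb; exact hb.1
        exact le_trans (by exact_mod_cast Set.ncard_le_ncard hsub2 (hf2 x)) (hf3 x)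
    have h5 : (insert a s').ncard = s'.ncard + 1 := by
      rw [Set.ncard_insert_of_notMem ha hs']
    rw [h5]
    push_cast
    nlinarith [Nat.cast_nonneg (α := ℝ) s'.ncard]




lemma padSeq_finite (ℓ : ℕ) : {p : ℕ → V | PadSeq ℓ p}.Finite := by
  have : {p : ℕ → V | PadSeq ℓ p} ⊆
      (fun q : Fin (ℓ+1) → V => (fun i : ℕ => if h : i ≤ ℓ then q ⟨i, by omega⟩ else q ⟨ℓ, by omega⟩)) ''
      Set.univ := by
    intro p hp
    refine ⟨fun i => p i, trivial, ?_⟩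
    funext i
    by_cases h : i ≤ ℓ <;> simp [h]
    exact (hp i (by omega)).symm
  exact Set.Finite.subset (Set.toFinite _) this

def WalkFrom (G : SimpleGraph V) (x : V) (ℓ : ℕ) : Set (ℕ → V) :=
  {p | p 0 = x ∧ PadSeq ℓ p ∧ ∀ i, i < ℓ → G.Adj (p i) (p (i + 1))}

def WalkBetween (G : SimpleGraph V) (x w : V) (ℓ : ℕ) : Set (ℕ → V) :=
  {p | p 0 = x ∧ p ℓ = w ∧ PadSeq ℓ p ∧ ∀ i, i < ℓ → G.Adj (p i) (p (i + 1))}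

lemma walkFrom_finite (G : SimpleGraph V) (x : V) (ℓ : ℕ) : (WalkFrom G x ℓ).Finite :=
  Set.Finite.subset (padSeq_finite ℓ) (fun p hp => hp.2.1)

lemma walkBetween_finite (G : SimpleGraph V) (x w : V) (ℓ : ℕ) : (WalkBetween G x w ℓ).Finite :=
  Set.Finite.subset (padSeq_finite ℓ) (fun p hp => hp.2.2.1)

lemma walkFrom_ncard_le (G : SimpleGraph V) {D : ℝ} (hD : 0 ≤ D)
    (hmax : ∀ v : V, ((G.neighborSet v).ncard : ℝ) ≤ D) (x : V) (ℓ : ℕ) :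
    ((WalkFrom G x ℓ).ncard : ℝ) ≤ D ^ ℓ := by
  induction ℓ with
  | zero =>
    have : WalkFrom G x 0 = {fun _ => x} := by
      ext p
      constructor
      · rintro ⟨h0, hpad, _⟩
        funext i
        show p i = x
        rw [hpad i (Nat.zero_le i), h0]
      · rintro rfl
        exact ⟨rfl, fun i _ => rfl, fun i hi => absurd hi (Nat.not_lt_zero i)⟩
    simp [this]
  | succ ℓ ih =>
    set f : (ℕ → V) → (ℕ → V) × V := fun p => ((fun i => p (min i ℓ)), p (ℓ + 1)) with hf
    have hinj : Set.InjOn f (WalkFrom G x (ℓ + 1)) := by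
      intro p hp q hq hpq
      have h1 : ∀ i, i ≤ ℓ → p i = q i := by
        intro i hi
        have := congrFun (congrArg Prod.fst hpq) i
        simpa [hf, min_eq_left hi] using this
      have h2 : p (ℓ + 1) = q (ℓ + 1) := congrArg Prod.snd hpq
      funext i
      rcases le_or_gt i ℓ with h | h
      · exact h1 i h
      · rcases Nat.eq_or_lt_of_le h with h' | h'
        · rw [← h']; exact h2
        · rw [hp.2.1 i (by omega), hq.2.1 i (by omega), h2]
    have himg : (WalkFrom G x (ℓ + 1)).ncard = (f '' WalkFrom G x (ℓ + 1)).ncard :=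
      (Set.ncard_image_of_injOn hinj).symm
    rw [himg]
    have hb := fib_bound (WalkFrom G x ℓ) (walkFrom_finite G x ℓ) (f '' WalkFrom G x (ℓ + 1)) D hD
      ?_ ?_ ?_
    · calc ((f '' WalkFrom G x (ℓ + 1)).ncard : ℝ) ≤ (WalkFrom G x ℓ).ncard * D := hb
        _ ≤ D ^ ℓ * D := by
            apply mul_le_mul_of_nonneg_right ih hD
        _ = D ^ (ℓ + 1) := by ring
    · rintro ⟨q, w⟩ ⟨p, hp, hpq⟩
      obtain ⟨h0, hpad, hadj⟩ := hp
      have hq : q = fun i => p (min i ℓ) := by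
        have := congrArg Prod.fst hpq; simpa using this.symm
      subst hq
      refine ⟨by simpa using h0, ?_, ?_⟩
      · intro i hi
        simp only
        rw [min_eq_right (by omega : ℓ ≤ i), min_self]
      · intro i hi
        simp only
        rw [min_eq_left (by omega : i ≤ ℓ), min_eq_left (by omega : i + 1 ≤ ℓ)]
        exact hadj i (by omega)
    · intro a
      apply Set.Finite.subset (Set.toFinite (G.neighborSet (a ℓ)))
      rintro b ⟨p, hp, hpq⟩
      have hb' : b = p (ℓ + 1) := (congrArg Prod.snd hpq).symm
      have ha : a ℓ = p ℓ := by
        have := congrArg Prod.fst hpq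
        have := congrFun this ℓ
        simp [hf] at this
        exact this.symm
      rw [hb', ha]
      exact hp.2.2 ℓ (by omega)
    · intro a
      have hsub : {b | (a, b) ∈ f '' WalkFrom G x (ℓ + 1)} ⊆ G.neighborSet (a ℓ) := by
        rintro b ⟨p, hp, hpq⟩
        have hb' : b = p (ℓ + 1) := (congrArg Prod.snd hpq).symm
        have ha : a ℓ = p ℓ := by
          have := congrFun (congrArg Prod.fst hpq) ℓ
          simp [hf] at this
          exact this.symm
        show b ∈ G.neighborSet (a ℓ)
        rw [hb', ha]
        exact hp.2.2 ℓ (by omega)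
      calc ({b | (a, b) ∈ f '' WalkFrom G x (ℓ + 1)}.ncard : ℝ)
          ≤ ((G.neighborSet (a ℓ)).ncard : ℝ) := by
            exact_mod_cast Set.ncard_le_ncard hsub (Set.toFinite _)
        _ ≤ D := hmax _

lemma walkBetween_ncard_le (G : SimpleGraph V) {D : ℝ} (hD : 0 ≤ D)
    (hmax : ∀ v : V, ((G.neighborSet v).ncard : ℝ) ≤ D) (x w : V) {ℓ : ℕ} (hℓ : 1 ≤ ℓ) :
    ((WalkBetween G x w ℓ).ncard : ℝ) ≤ D ^ (ℓ - 1) := by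
  set f : (ℕ → V) → (ℕ → V) := fun p => (fun i => p (min i (ℓ - 1))) with hf
  have hmaps : ∀ p ∈ WalkBetween G x w ℓ, f p ∈ WalkFrom G x (ℓ - 1) := by
    rintro p ⟨h0, hw, hpad, hadj⟩
    refine ⟨by simp [hf, h0], ?_, ?_⟩
    · intro i hi
      simp only [hf]
      rw [min_eq_right hi, min_self]
    · intro i hi
      simp only [hf]
      rw [min_eq_left (by omega : i ≤ ℓ - 1), min_eq_left (by omega : i + 1 ≤ ℓ - 1)]
      exact hadj i (by omega)
  have hinj : Set.InjOn f (WalkBetween G x w ℓ) := by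
    rintro p hp q hq hpq
    have h1 : ∀ i, i ≤ ℓ - 1 → p i = q i := by
      intro i hi
      have := congrFun hpq i
      simpa [hf, min_eq_left hi] using this
    funext i
    rcases le_or_gt i (ℓ - 1) with h | h
    · exact h1 i h
    · have hiℓ : ℓ ≤ i := by omega
      rw [hp.2.2.1 i hiℓ, hq.2.2.1 i hiℓ, hp.2.1, hq.2.1]
  calc ((WalkBetween G x w ℓ).ncard : ℝ)
      ≤ ((WalkFrom G x (ℓ - 1)).ncard : ℝ) := by
        exact_mod_cast Set.ncard_le_ncard_of_injOn f hmaps hinj (walkFrom_finite G x (ℓ - 1))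
    _ ≤ D ^ (ℓ - 1) := walkFrom_ncard_le G hD hmax x (ℓ - 1)

lemma walkFrom_through_ncard_le (G : SimpleGraph V) {D : ℝ} (hD : 0 ≤ D)
    (hmax : ∀ v : V, ((G.neighborSet v).ncard : ℝ) ≤ D) (x w : V) {ℓ s : ℕ}
    (hs1 : 1 ≤ s) (hs2 : s ≤ ℓ) :
    (({p ∈ WalkFrom G x ℓ | p s = w}).ncard : ℝ) ≤ D ^ (ℓ - 1) := by
  set f : (ℕ → V) → (ℕ → V) × (ℕ → V) :=
    fun p => ((fun i => p (min i s)), (fun i => p (s + min i (ℓ - s)))) with hf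
  have hmaps : ∀ p ∈ {p ∈ WalkFrom G x ℓ | p s = w},
      f p ∈ (WalkBetween G x w s) ×ˢ (WalkFrom G w (ℓ - s)) := by
    rintro p ⟨⟨h0, hpad, hadj⟩, hw⟩
    constructor
    · refine ⟨by simpa [hf] using h0, ?_, ?_, ?_⟩
      · simpa [hf, min_self] using hw
      · intro i hi
        simp only [hf]
        rw [min_eq_right hi, min_self]
      · intro i hi
        simp only [hf]
        rw [min_eq_left (by omega : i ≤ s), min_eq_left (by omega : i + 1 ≤ s)]
        exact hadj i (by omega)
    · refine ⟨by simpa [hf] using hw, ?_, ?_⟩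
      · intro i hi
        simp only [hf]
        rw [min_eq_right hi, min_self]
      · intro i hi
        simp only [hf]
        rw [min_eq_left (by omega : i ≤ ℓ - s), min_eq_left (by omega : i + 1 ≤ ℓ - s)]
        exact hadj (s + i) (by omega)
  have hinj : Set.InjOn f {p ∈ WalkFrom G x ℓ | p s = w} := by
    rintro p hp q hq hpq
    have h1 : ∀ i, i ≤ s → p i = q i := by
      intro i hi
      have := congrFun (congrArg Prod.fst hpq) i
      simpa [hf, min_eq_left hi] using this
    have h2 : ∀ i, s ≤ i → i ≤ ℓ → p i = q i := by
      intro i hsi hiℓ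
      have := congrFun (congrArg Prod.snd hpq) (i - s)
      simp only [hf] at this
      rwa [min_eq_left (by omega : i - s ≤ ℓ - s),
        (by omega : s + (i - s) = i)] at this
    funext i
    rcases le_or_gt i ℓ with h | h
    · rcases le_or_gt i s with h' | h'
      · exact h1 i h'
      · exact h2 i (by omega) h
    · rw [hp.1.2.1 i (by omega), hq.1.2.1 i (by omega), h2 ℓ hs2 le_rfl]
  calc (({p ∈ WalkFrom G x ℓ | p s = w}).ncard : ℝ)
      ≤ (((WalkBetween G x w s) ×ˢ (WalkFrom G w (ℓ - s))).ncard : ℝ) := by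
        exact_mod_cast Set.ncard_le_ncard_of_injOn f hmaps hinj
          (Set.Finite.prod (walkBetween_finite G x w s) (walkFrom_finite G w (ℓ - s)))
    _ = ((WalkBetween G x w s).ncard : ℝ) * ((WalkFrom G w (ℓ - s)).ncard : ℝ) := by
        rw [ncard_prod']; push_cast; ring
    _ ≤ D ^ (s - 1) * D ^ (ℓ - s) := by
        apply mul_le_mul (walkBetween_ncard_le G hD hmax x w hs1)
          (walkFrom_ncard_le G hD hmax w (ℓ - s)) (Nat.cast_nonneg _) (pow_nonneg hD _)
    _ = D ^ (ℓ - 1) := by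
        rw [← pow_add]
        congr 1
        omega

lemma exists_good_middle (G : SimpleGraph V) {L N : ℕ} {u v : V}
    (hmd : ManyDisjointPaths G L u v N) (F : Set V) (hF : F.ncard < N) :
    ∃ M : ℕ → V, PathSeq G L M ∧ M 0 = u ∧ M L = v ∧ ∀ s, 0 < s → s < L → M s ∉ F := by
  obtain ⟨P, h1, _, h3⟩ := hmd
  by_contra hcon
  push_neg at hcon
  have hsel : ∀ a : Fin N, ∃ s, 0 < s ∧ s < L ∧ P a s ∈ F := by
    intro a
    obtain ⟨s, hs1, hs2, hs3⟩ := hcon (P a) (h1 a).1 (h1 a).2.1 (h1 a).2.2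
    exact ⟨s, hs1, hs2, hs3⟩
  choose sel hsel1 hsel2 hsel3 using hsel
  have hinj : Function.Injective (fun a : Fin N => P a (sel a)) := by
    intro a b hab
    by_contra hne
    exact h3 a b hne (sel a) (sel b) (hsel1 a) (hsel2 a) (hsel1 b) (hsel2 b) hab
  have hcard : N ≤ F.ncard := by
    have h5 : (Finset.univ.image (fun a : Fin N => P a (sel a))).card = N := by
      rw [Finset.card_image_of_injective _ hinj, Finset.card_univ, Fintype.card_fin]
    have h6 : (Finset.univ.image (fun a : Fin N => P a (sel a))) ⊆ F.toFinite.toFinset := by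
      intro w hw
      simp only [Finset.mem_image] at hw
      obtain ⟨a, _, rfl⟩ := hw
      simp only [Set.Finite.mem_toFinset]
      exact hsel3 a
    have := Finset.card_le_card h6
    rw [h5] at this
    rwa [Set.ncard_eq_toFinset_card F F.toFinite]
  omega

lemma ncard_biUnion_le_real {ι α : Type*} (F : Finset ι) (f : ι → Set α) (B : ℝ) (hB : 0 ≤ B)
    (h : ∀ q ∈ F, ((f q).ncard : ℝ) ≤ B) : ((⋃ q ∈ F, f q).ncard : ℝ) ≤ F.card * B := by
  calc ((⋃ q ∈ F, f q).ncard : ℝ) ≤ ((∑ q ∈ F, (f q).ncard : ℕ) : ℝ) := by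
        exact_mod_cast ncard_biUnion_le' F f
    _ = ∑ q ∈ F, ((f q).ncard : ℝ) := by push_cast; rfl
    _ ≤ ∑ _q ∈ F, B := Finset.sum_le_sum h
    _ = F.card * B := by rw [Finset.sum_const, nsmul_eq_mul]

lemma exists_good_pair (G : SimpleGraph V) {k h i j : ℕ} {K δ : ℝ} (hK : 0 < K) (hδ : 0 < δ)
    (hmax : ∀ v : V, ((G.neighborSet v).ncard : ℝ) ≤ K * δ)
    (hi : i < k) (hj : j < k) {x y : V} {U : Set V}
    (hU : U.ncard ≤ h) (hrich : Rich G k h K δ i j x y) :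
    ∃ P Q : ℕ → V, PathSeq G i P ∧ P 0 = x ∧ PathSeq G j Q ∧ Q 0 = y ∧
      ManyDisjointPaths G (2 * k - i - j) (P i) (Q j) ((h + 2) * (2 * k + 1) + 1) ∧
      (∀ s, 1 ≤ s → s ≤ i → P s ∉ U \ {x}) ∧
      (∀ s, 1 ≤ s → s ≤ j → Q s ∉ U \ {y}) ∧
      (∀ s s', s ≤ i → 1 ≤ s' → s' ≤ j → Q s' ≠ P s) := by
  classical
  set D := K * δ with hDdef
  have hD : 0 < D := mul_pos hK hδ
  obtain ⟨hxy, hS⟩ := hrich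
  set S : Set ((ℕ → V) × (ℕ → V)) := {PQ : (ℕ → V) × (ℕ → V) |
      PathSeq G i PQ.1 ∧ PQ.1 0 = x ∧ PadSeq i PQ.1 ∧
      PathSeq G j PQ.2 ∧ PQ.2 0 = y ∧ PadSeq j PQ.2 ∧
      ManyDisjointPaths G (2 * k - i - j) (PQ.1 i) (PQ.2 j) ((h + 2) * (2 * k + 1) + 1)} with hSdef
  set WP := WalkFrom G x i with hWP
  set WQ := WalkFrom G y j with hWQ
  have hSsub : ∀ PQ ∈ S, PQ.1 ∈ WP ∧ PQ.2 ∈ WQ := by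
    rintro PQ ⟨h1, h2, h3, h4, h5, h6, h7⟩
    exact ⟨⟨h2, h3, h1.1⟩, ⟨h5, h6, h4.1⟩⟩
  set W1 : Finset V := (U \ {x}).toFinite.toFinset with hW1
  set W2 : Finset V := (U \ {y}).toFinite.toFinset with hW2
  have hW1card : W1.card ≤ h := by
    rw [hW1, ← Set.ncard_eq_toFinset_card]
    exact le_trans (Set.ncard_le_ncard Set.diff_subset (Set.toFinite U)) hU
  have hW2card : W2.card ≤ h := by
    rw [hW2, ← Set.ncard_eq_toFinset_card]
    exact le_trans (Set.ncard_le_ncard Set.diff_subset (Set.toFinite U)) hU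
  set U1 : Set ((ℕ → V) × (ℕ → V)) :=
    ⋃ q ∈ (Finset.Icc 1 i ×ˢ W1), ({p ∈ WP | p q.1 = q.2} ×ˢ WQ) with hU1
  set U2 : Set ((ℕ → V) × (ℕ → V)) :=
    ⋃ q ∈ (Finset.Icc 1 j ×ˢ W2), (WP ×ˢ {p ∈ WQ | p q.1 = q.2}) with hU2
  set U3 : Set ((ℕ → V) × (ℕ → V)) :=
    ⋃ q ∈ (Finset.range (i + 1) ×ˢ Finset.Icc 1 j),
      {PQ : (ℕ → V) × (ℕ → V) | PQ.1 ∈ WP ∧ PQ.2 ∈ WQ ∧ PQ.2 q.2 = PQ.1 q.1} with hU3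
  have hfinU : (U1 ∪ U2 ∪ U3).Finite := by
    apply Set.Finite.union
    apply Set.Finite.union
    · exact Set.Finite.biUnion (Finset.finite_toSet _) (fun q _ =>
        Set.Finite.prod (Set.Finite.subset (walkFrom_finite G x i) (fun p hp => hp.1)) (walkFrom_finite G y j))
    · exact Set.Finite.biUnion (Finset.finite_toSet _) (fun q _ =>
        Set.Finite.prod (walkFrom_finite G x i) (Set.Finite.subset (walkFrom_finite G y j) (fun p hp => hp.1)))
    · exact Set.Finite.biUnion (Finset.finite_toSet _) (fun q _ =>
        Set.Finite.subset (Set.Finite.prod (walkFrom_finite G x i) (walkFrom_finite G y j))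
          (fun PQ hPQ => ⟨hPQ.1, hPQ.2.1⟩))
  -- bounds
  have hDpow : ∀ a : ℕ, (0:ℝ) ≤ D ^ a := fun a => pow_nonneg hD.le a
  have hb1 : ((U1.ncard : ℝ)) ≤ (i * h : ℕ) * D ^ (i + j - 1) := by
    calc ((U1.ncard : ℝ)) ≤ (Finset.Icc 1 i ×ˢ W1).card * D ^ (i + j - 1) := by
          apply ncard_biUnion_le_real _ _ _ (hDpow _)
          rintro ⟨s, w⟩ hq
          simp only [Finset.mem_product, Finset.mem_Icc] at hq
          have hs1 : 1 ≤ s := hq.1.1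
          have hs2 : s ≤ i := hq.1.2
          calc (({p ∈ WP | p s = w} ×ˢ WQ).ncard : ℝ)
              = (({p ∈ WP | p s = w}).ncard : ℝ) * ((WQ).ncard : ℝ) := by
                rw [ncard_prod']; push_cast; ring
            _ ≤ D ^ (i - 1) * D ^ j := by
                apply mul_le_mul (walkFrom_through_ncard_le G hD.le hmax x w hs1 hs2)
                  (walkFrom_ncard_le G hD.le hmax y j) (Nat.cast_nonneg _) (hDpow _)
            _ = D ^ (i + j - 1) := by rw [← pow_add]; congr 1; omega
      _ ≤ (i * h : ℕ) * D ^ (i + j - 1) := by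
          apply mul_le_mul_of_nonneg_right _ (hDpow _)
          have : (Finset.Icc 1 i ×ˢ W1).card ≤ i * h := by
            rw [Finset.card_product, Nat.card_Icc]
            have : i + 1 - 1 = i := by omega
            rw [this]
            exact Nat.mul_le_mul_left i hW1card
          exact_mod_cast this
  have hb2 : ((U2.ncard : ℝ)) ≤ (j * h : ℕ) * D ^ (i + j - 1) := by
    calc ((U2.ncard : ℝ)) ≤ (Finset.Icc 1 j ×ˢ W2).card * D ^ (i + j - 1) := by
          apply ncard_biUnion_le_real _ _ _ (hDpow _)
          rintro ⟨s, w⟩ hq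
          simp only [Finset.mem_product, Finset.mem_Icc] at hq
          have hs1 : 1 ≤ s := hq.1.1
          have hs2 : s ≤ j := hq.1.2
          calc ((WP ×ˢ {p ∈ WQ | p s = w}).ncard : ℝ)
              = ((WP).ncard : ℝ) * (({p ∈ WQ | p s = w}).ncard : ℝ) := by
                rw [ncard_prod']; push_cast; ring
            _ ≤ D ^ i * D ^ (j - 1) := by
                apply mul_le_mul (walkFrom_ncard_le G hD.le hmax x i)
                  (walkFrom_through_ncard_le G hD.le hmax y w hs1 hs2) (Nat.cast_nonneg _) (hDpow _)
            _ = D ^ (i + j - 1) := by rw [← pow_add]; congr 1; omega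
      _ ≤ (j * h : ℕ) * D ^ (i + j - 1) := by
          apply mul_le_mul_of_nonneg_right _ (hDpow _)
          have : (Finset.Icc 1 j ×ˢ W2).card ≤ j * h := by
            rw [Finset.card_product, Nat.card_Icc]
            have : j + 1 - 1 = j := by omega
            rw [this]
            exact Nat.mul_le_mul_left j hW2card
          exact_mod_cast this
  have hb3 : ((U3.ncard : ℝ)) ≤ ((i + 1) * j : ℕ) * D ^ (i + j - 1) := by
    calc ((U3.ncard : ℝ)) ≤ (Finset.range (i + 1) ×ˢ Finset.Icc 1 j).card * D ^ (i + j - 1) := by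
          apply ncard_biUnion_le_real _ _ _ (hDpow _)
          rintro ⟨s, s'⟩ hq
          simp only [Finset.mem_product, Finset.mem_Icc, Finset.mem_range] at hq
          have hs'1 : 1 ≤ s' := hq.2.1
          have hs'2 : s' ≤ j := hq.2.2
          have hfib := fib_bound WP (walkFrom_finite G x i)
            {PQ : (ℕ → V) × (ℕ → V) | PQ.1 ∈ WP ∧ PQ.2 ∈ WQ ∧ PQ.2 s' = PQ.1 s}
            (D ^ (j - 1)) (hDpow _) (fun PQ hPQ => hPQ.1) ?_ ?_
          · calc ({PQ : (ℕ → V) × (ℕ → V) | PQ.1 ∈ WP ∧ PQ.2 ∈ WQ ∧ PQ.2 s' = PQ.1 s}.ncard : ℝ)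
                ≤ (WP.ncard : ℝ) * D ^ (j - 1) := hfib
              _ ≤ D ^ i * D ^ (j - 1) := by
                  apply mul_le_mul_of_nonneg_right (walkFrom_ncard_le G hD.le hmax x i) (hDpow _)
              _ = D ^ (i + j - 1) := by rw [← pow_add]; congr 1; omega
          · intro a
            apply Set.Finite.subset (walkFrom_finite G y j)
            intro b hb
            exact hb.2.1
          · intro a
            have hsub : {b | (a, b) ∈ {PQ : (ℕ → V) × (ℕ → V) | PQ.1 ∈ WP ∧ PQ.2 ∈ WQ ∧ PQ.2 s' = PQ.1 s}}
                ⊆ {p ∈ WQ | p s' = a s} := by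
              intro b hb
              exact ⟨hb.2.1, hb.2.2⟩
            calc ({b | (a, b) ∈ {PQ : (ℕ → V) × (ℕ → V) | PQ.1 ∈ WP ∧ PQ.2 ∈ WQ ∧ PQ.2 s' = PQ.1 s}}.ncard : ℝ)
                ≤ (({p ∈ WQ | p s' = a s}).ncard : ℝ) := by
                  exact_mod_cast Set.ncard_le_ncard hsub
                    (Set.Finite.subset (walkFrom_finite G y j) (fun p hp => hp.1))
              _ ≤ D ^ (j - 1) := walkFrom_through_ncard_le G hD.le hmax y (a s) hs'1 hs'2
      _ ≤ ((i + 1) * j : ℕ) * D ^ (i + j - 1) := by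
          apply mul_le_mul_of_nonneg_right _ (hDpow _)
          have : (Finset.range (i + 1) ×ˢ Finset.Icc 1 j).card = (i + 1) * j := by
            rw [Finset.card_product, Finset.card_range, Nat.card_Icc, Nat.add_sub_cancel]
          rw [this]
  -- total bound against threshold
  have hbadle : ((U1 ∪ U2 ∪ U3).ncard : ℝ) ≤
      ((2 * (i + j) * h * (2 * k + 1) + 2 * (i + 1) * j : ℕ) : ℝ) * D ^ ((i : ℤ) + (j : ℤ) - 1) := by
    have htot : ((U1 ∪ U2 ∪ U3).ncard : ℝ) ≤
        ((i * h : ℕ) + (j * h : ℕ) + ((i + 1) * j : ℕ)) * D ^ (i + j - 1) := by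
      have s1 := Set.ncard_union_le (U1 ∪ U2) U3
      have s2 := Set.ncard_union_le U1 U2
      have : ((U1 ∪ U2 ∪ U3).ncard : ℝ) ≤ (U1.ncard : ℝ) + (U2.ncard : ℝ) + (U3.ncard : ℝ) := by
        push_cast
        exact_mod_cast le_trans s1 (Nat.add_le_add_right s2 _)
      calc ((U1 ∪ U2 ∪ U3).ncard : ℝ) ≤ (U1.ncard : ℝ) + (U2.ncard : ℝ) + (U3.ncard : ℝ) := this
        _ ≤ (i * h : ℕ) * D ^ (i + j - 1) + (j * h : ℕ) * D ^ (i + j - 1) + ((i + 1) * j : ℕ) * D ^ (i + j - 1) :=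
            add_le_add (add_le_add hb1 hb2) hb3
        _ = ((i * h : ℕ) + (j * h : ℕ) + ((i + 1) * j : ℕ)) * D ^ (i + j - 1) := by ring
    rcases Nat.eq_zero_or_pos (i + j) with hij | hij
    · have hi0 : i = 0 := by omega
      have hj0 : j = 0 := by omega
      subst hi0; subst hj0
      calc ((U1 ∪ U2 ∪ U3).ncard : ℝ) ≤ ((0 * h : ℕ) + (0 * h : ℕ) + ((0 + 1) * 0 : ℕ)) * D ^ (0 + 0 - 1) := htot
        _ = 0 := by norm_num
        _ ≤ _ := by
            rw [(by norm_num : 2 * (0 + 0) * h * (2 * k + 1) + 2 * (0 + 1) * 0 = 0)]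
            simp
    · have hz : D ^ ((i : ℤ) + (j : ℤ) - 1) = D ^ (i + j - 1) := by
        rw [show (i : ℤ) + (j : ℤ) - 1 = ((i + j - 1 : ℕ) : ℤ) by omega, zpow_natCast]
      rw [hz]
      refine le_trans htot (mul_le_mul_of_nonneg_right ?_ (hDpow _))
      have hc : i * h + j * h + (i + 1) * j ≤ 2 * (i + j) * h * (2 * k + 1) + 2 * (i + 1) * j := by
        calc i * h + j * h + (i + 1) * j = (i + j) * h * 1 + (i + 1) * j * 1 := by ring
          _ ≤ (i + j) * h * (2 * (2 * k + 1)) + (i + 1) * j * 2 :=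
            Nat.add_le_add (Nat.mul_le_mul_left _ (by omega)) (Nat.mul_le_mul_left _ (by omega))
          _ = 2 * (i + j) * h * (2 * k + 1) + 2 * (i + 1) * j := by ring
      exact_mod_cast hc
  -- extract a good pair
  have hgood : ∃ PQ ∈ S, PQ ∉ U1 ∪ U2 ∪ U3 := by
    by_contra hcon
    push_neg at hcon
    have hsub : S ⊆ U1 ∪ U2 ∪ U3 := fun PQ hPQ => hcon PQ hPQ
    have := Set.ncard_le_ncard hsub hfinU
    have hlt := lt_of_lt_of_le hS (le_trans (by exact_mod_cast this) hbadle)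
    exact lt_irrefl _ hlt
  obtain ⟨PQ, hPQS, hPQbad⟩ := hgood
  obtain ⟨hp1, hp2, hp3, hp4, hp5, hp6, hp7⟩ := hPQS
  refine ⟨PQ.1, PQ.2, hp1, hp2, hp4, hp5, hp7, ?_, ?_, ?_⟩
  · intro s hs1 hs2 hmem
    apply hPQbad
    left; left
    rw [hU1]
    simp only [Set.mem_iUnion]
    refine ⟨(s, PQ.1 s), ?_, ?_⟩
    · simp only [Finset.mem_product, Finset.mem_Icc, hW1, Set.Finite.mem_toFinset]
      exact ⟨⟨hs1, hs2⟩, hmem⟩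
    · exact ⟨⟨(hSsub PQ ⟨hp1, hp2, hp3, hp4, hp5, hp6, hp7⟩).1, rfl⟩,
        (hSsub PQ ⟨hp1, hp2, hp3, hp4, hp5, hp6, hp7⟩).2⟩
  · intro s hs1 hs2 hmem
    apply hPQbad
    left; right
    rw [hU2]
    simp only [Set.mem_iUnion]
    refine ⟨(s, PQ.2 s), ?_, ?_⟩
    · simp only [Finset.mem_product, Finset.mem_Icc, hW2, Set.Finite.mem_toFinset]
      exact ⟨⟨hs1, hs2⟩, hmem⟩
    · exact ⟨(hSsub PQ ⟨hp1, hp2, hp3, hp4, hp5, hp6, hp7⟩).1,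
        ⟨(hSsub PQ ⟨hp1, hp2, hp3, hp4, hp5, hp6, hp7⟩).2, rfl⟩⟩
  · intro s s' hs hs'1 hs'2 heq
    apply hPQbad
    right
    rw [hU3]
    simp only [Set.mem_iUnion]
    refine ⟨(s, s'), ?_, ?_⟩
    · simp only [Finset.mem_product, Finset.mem_Icc, Finset.mem_range]
      exact ⟨by omega, hs'1, hs'2⟩
    · exact ⟨(hSsub PQ ⟨hp1, hp2, hp3, hp4, hp5, hp6, hp7⟩).1,
        (hSsub PQ ⟨hp1, hp2, hp3, hp4, hp5, hp6, hp7⟩).2, heq⟩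

lemma ext_lemma (G : SimpleGraph V) {k h i j : ℕ} {K δ : ℝ} (hK : 0 < K) (hδ : 0 < δ)
    (hmax : ∀ v : V, ((G.neighborSet v).ncard : ℝ) ≤ K * δ)
    (hk : 1 ≤ k) (hi : i < k) (hj : j < k) {x y : V} {U : Set V}
    (hxU : x ∈ U) (hyU : y ∈ U) (hU : U.ncard ≤ h) (hrich : Rich G k h K δ i j x y) :
    ∃ p : ℕ → V, PathSeq G (2 * k) p ∧ p 0 = x ∧ p (2 * k) = y ∧
      ∀ s, 0 < s → s < 2 * k → p s ∉ U := by
  classical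
  have hxy : x ≠ y := hrich.1
  obtain ⟨P, Q, hPpath, hP0, hQpath, hQ0, hmd, hnb1, hnb2, hnb3⟩ :=
    exists_good_pair G hK hδ hmax hi hj hU hrich
  set L := 2 * k - i - j with hLdef
  have hL2 : 2 ≤ L := by omega
  have hiL : i + L = 2 * k - j := by omega
  have hiLj : i + L + j = 2 * k := by omega
  -- P avoids U except at 0
  have hPU : ∀ s, 1 ≤ s → s ≤ i → P s ∉ U := by
    intro s h1 h2 hmem
    have hPsx : P s ≠ x := by
      rw [← hP0]
      exact fun heq => hPpath.2 0 s (by omega) h2 heq.symm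
    exact hnb1 s h1 h2 ⟨hmem, hPsx⟩
  have hQU : ∀ s, 1 ≤ s → s ≤ j → Q s ∉ U := by
    intro s h1 h2 hmem
    have hQsy : Q s ≠ y := by
      rw [← hQ0]
      exact fun heq => hQpath.2 0 s (by omega) h2 heq.symm
    exact hnb2 s h1 h2 ⟨hmem, hQsy⟩
  -- P and Q fully disjoint
  have hdisj : ∀ s s', s ≤ i → s' ≤ j → P s ≠ Q s' := by
    intro s s' hs hs' heq
    rcases Nat.eq_zero_or_pos s' with h0 | h0
    · subst h0
      rw [hQ0] at heq
      rcases Nat.eq_zero_or_pos s with hs0 | hs0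
      · subst hs0; rw [hP0] at heq; exact hxy heq
      · exact hPU s hs0 hs (heq ▸ hyU)
    · exact hnb3 s s' hs h0 hs' heq.symm
  -- choose the middle path avoiding F
  set F : Set V := U ∪ (P '' Set.Iic i) ∪ (Q '' Set.Iic j) with hFdef
  have hFcard : F.ncard < (h + 2) * (2 * k + 1) + 1 := by
    have c1 : (P '' Set.Iic i).ncard ≤ i + 1 := by
      have := Set.ncard_image_le (f := P) (s := Set.Iic i) (Set.finite_Iic i)
      rwa [show (Set.Iic i).ncard = i + 1 by
        rw [← Finset.coe_Iic, Set.ncard_coe_finset, Nat.card_Iic]] at this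
    have c2 : (Q '' Set.Iic j).ncard ≤ j + 1 := by
      have := Set.ncard_image_le (f := Q) (s := Set.Iic j) (Set.finite_Iic j)
      rwa [show (Set.Iic j).ncard = j + 1 by
        rw [← Finset.coe_Iic, Set.ncard_coe_finset, Nat.card_Iic]] at this
    have c3 := Set.ncard_union_le (U ∪ (P '' Set.Iic i)) (Q '' Set.Iic j)
    have c4 := Set.ncard_union_le U (P '' Set.Iic i)
    have : F.ncard ≤ h + (i + 1) + (j + 1) := by
      rw [hFdef]
      omega
    nlinarith
  obtain ⟨M, hMpath, hM0, hML, hMint⟩ := exists_good_middle G hmd F hFcard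
  -- the composite path
  set p : ℕ → V := fun s => if s ≤ i then P s else if s ≤ i + L then M (s - i) else Q (2 * k - s)
    with hpdef
  have heq1 : ∀ s, s ≤ i → p s = P s := by
    intro s hs; simp [hpdef, hs]
  have heq2 : ∀ s, i ≤ s → s ≤ i + L → p s = M (s - i) := by
    intro s hs1 hs2
    rcases Nat.eq_or_lt_of_le hs1 with h | h
    · subst h
      rw [heq1 i le_rfl, Nat.sub_self, hM0]
    · simp [hpdef, hs2, Nat.not_le.mpr h]
  have heq3 : ∀ s, i + L ≤ s → s ≤ 2 * k → p s = Q (2 * k - s) := by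
    intro s hs1 hs2
    rcases Nat.eq_or_lt_of_le hs1 with h | h
    · subst h
      rw [heq2 (i + L) (by omega) le_rfl, Nat.add_sub_cancel_left, hML]
      congr 1
      omega
    · have h1 : ¬ s ≤ i := by omega
      have h2 : ¬ s ≤ i + L := by omega
      simp [hpdef, h1, h2]
  -- canonical region representation
  have hval : ∀ t, t ≤ 2 * k →
      (t ≤ i ∧ p t = P t) ∨
      (i < t ∧ t < i + L ∧ p t = M (t - i) ∧ 0 < t - i ∧ t - i < L) ∨
      (i + L ≤ t ∧ p t = Q (2 * k - t) ∧ 2 * k - t ≤ j) := by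
    intro t ht
    rcases le_or_gt t i with h1 | h1
    · exact Or.inl ⟨h1, heq1 t h1⟩
    · rcases lt_or_ge t (i + L) with h2 | h2
      · exact Or.inr (Or.inl ⟨h1, h2, heq2 t (by omega) (by omega), by omega, by omega⟩)
      · exact Or.inr (Or.inr ⟨h2, heq3 t h2 ht, by omega⟩)
  have hMP : ∀ d, 0 < d → d < L → ∀ s', s' ≤ i → M d ≠ P s' := by
    intro d hd1 hd2 s' hs' heq
    exact hMint d hd1 hd2 (Or.inl (Or.inr ⟨s', hs', heq.symm⟩))
  have hMQ : ∀ d, 0 < d → d < L → ∀ s', s' ≤ j → M d ≠ Q s' := by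
    intro d hd1 hd2 s' hs' heq
    exact hMint d hd1 hd2 (Or.inr ⟨s', hs', heq.symm⟩)
  have hMU : ∀ d, 0 < d → d < L → M d ∉ U := by
    intro d hd1 hd2 hmem
    exact hMint d hd1 hd2 (Or.inl (Or.inl hmem))
  refine ⟨p, ⟨?_, ?_⟩, ?_, ?_, ?_⟩
  · -- adjacency
    intro s hs
    rcases le_or_gt (s + 1) i with h1 | h1
    · rw [heq1 s (by omega), heq1 (s + 1) h1]
      exact hPpath.1 s (by omega)
    · rcases le_or_gt (s + 1) (i + L) with h2 | h2
      · rw [heq2 s (by omega) (by omega), heq2 (s + 1) (by omega) h2]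
        have : s + 1 - i = (s - i) + 1 := by omega
        rw [this]
        exact hMpath.1 (s - i) (by omega)
      · rw [heq3 s (by omega) (by omega), heq3 (s + 1) (by omega) (by omega)]
        have hadj := hQpath.1 (2 * k - (s + 1)) (by omega)
        have : 2 * k - (s + 1) + 1 = 2 * k - s := by omega
        rw [this] at hadj
        exact hadj.symm
  · -- injectivity
    intro s s' hss' hs'2k
    rcases hval s (by omega) with ⟨h1, e1⟩ | ⟨h1, h2, e1, h3, h4⟩ | ⟨h1, e1, h2⟩ <;>
      rcases hval s' hs'2k with ⟨g1, f1⟩ | ⟨g1, g2, f1, g3, g4⟩ | ⟨g1, f1, g2⟩ <;>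
      rw [e1, f1]
    · exact hPpath.2 s s' hss' g1
    · exact fun heq => hMP (s' - i) g3 g4 s h1 heq.symm
    · exact hdisj s (2 * k - s') h1 g2
    · exact fun heq => hMP (s - i) h3 h4 s' g1 heq
    · exact fun heq => hMpath.2 (s - i) (s' - i) (by omega) (by omega) heq
    · exact hMQ (s - i) h3 h4 (2 * k - s') g2
    · exact fun heq => hdisj s' (2 * k - s) g1 h2 heq.symm
    · exact fun heq => hMQ (s' - i) g3 g4 (2 * k - s) h2 heq.symm
    · intro heq
      exact hQpath.2 (2 * k - s') (2 * k - s) (by omega) h2 heq.symm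
  · rw [heq1 0 (by omega), hP0]
  · rw [heq3 (2 * k) (by omega) le_rfl, Nat.sub_self, hQ0]
  · intro s hs1 hs2
    rcases hval s (by omega) with ⟨h1, e1⟩ | ⟨h1, h2, e1, h3, h4⟩ | ⟨h1, e1, h2⟩ <;> rw [e1]
    · exact hPU s (by omega) h1
    · exact hMU (s - i) h3 h4
    · exact hQU (2 * k - s) (by omega) h2

lemma reverse_pathSeq (G : SimpleGraph V) {ℓ : ℕ} {p : ℕ → V} (hp : PathSeq G ℓ p) :
    PathSeq G ℓ (fun s => p (ℓ - s)) := by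
  constructor
  · intro s hs
    have := hp.1 (ℓ - s - 1) (by omega)
    have h1 : ℓ - s - 1 + 1 = ℓ - s := by omega
    have h2 : ℓ - (s + 1) = ℓ - s - 1 := by omega
    rw [h1] at this
    simp only [h2]
    exact this.symm
  · intro s s' hss' hs'
    have := hp.2 (ℓ - s') (ℓ - s) (by omega) (by omega)
    exact this.symm

/-- **Lemma 4.4, second part.** With the notation of the previous statement
and `r = R_k(t)` the `k`-colour Ramsey number, the union graph `𝒢(v) = ⋃_{1 ≤ ℓ ≤ k} 𝒢_ℓ(v)`
contains no clique on `r` vertices. -/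
theorem aux_union_graph_is_clique_free
    {V : Type*} [Fintype V] [DecidableEq V] (G : SimpleGraph V)
    (t k : ℕ) (hk : 1 ≤ k)
    (m : Fin t → Fin t → ℕ) (hsymm : ∀ a b, m a b = m b a) (hirr : ∀ a, m a a = 0)
    (K δ : ℝ) (hK : 0 < K) (hδ : 0 < δ)
    (hmax : ∀ v : V, ((G.neighborSet v).ncard : ℝ) ≤ K * δ)
    (hHfree : ¬ ContainsMultiSubdiv G t m (2 * k))
    (r : ℕ) (hr : RamseyProp k t r) (hrleast : ∀ r', RamseyProp k t r' → r ≤ r')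
    (v : V) :
    ¬ ∃ c : Fin r → (Fin (k + 1) → V),
        Function.Injective c ∧
        (∀ a, c a 0 = v ∧ ∀ s : Fin k, G.Adj (c a s.castSucc) (c a s.succ)) ∧
        (∀ a b, a ≠ b → ∃ ℓ : Fin (k + 1), 1 ≤ (ℓ : ℕ) ∧
          AuxAdj G k (nH t k m) K δ ℓ (c a) (c b)) := by
  classical
  rintro ⟨c, hcinj, hcpath, hcadj⟩
  set h : ℕ := nH t k m with hhdef
  -- choose levels
  have lev : ∀ a b : Fin r, a ≠ b → {ℓ : Fin (k + 1) // 1 ≤ (ℓ : ℕ) ∧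
      AuxAdj G k h K δ ℓ (c a) (c b)} := by
    intro a b hab
    exact ⟨(hcadj a b hab).choose, (hcadj a b hab).choose_spec⟩
  set χ : Fin r → Fin r → Fin k := fun a b =>
    if hab : a < b then ⟨((lev a b (ne_of_lt hab)).1 : ℕ) - 1, by
      have := (lev a b (ne_of_lt hab)).1.isLt; omega⟩
    else if hba : b < a then ⟨((lev b a (ne_of_lt hba)).1 : ℕ) - 1, by
      have := (lev b a (ne_of_lt hba)).1.isLt; omega⟩
    else ⟨0, by omega⟩ with hχ
  have hχsymm : ∀ a b, χ a b = χ b a := by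
    intro a b
    rcases lt_trichotomy a b with hab | hab | hab
    · simp [hχ, hab, not_lt_of_gt hab]
    · simp [hχ, hab, lt_irrefl]
    · simp [hχ, hab, not_lt_of_gt hab]
  obtain ⟨col, s, hscard, hmono⟩ := hr χ hχsymm
  set ℓ0 : Fin (k + 1) := ⟨(col : ℕ) + 1, by have := col.isLt; omega⟩ with hℓ0
  have hℓ0ne : ℓ0 ≠ 0 := by
    intro hcon
    have := congrArg Fin.val hcon
    simp [hℓ0] at this
  set e := s.orderIsoOfFin hscard with he
  set φ : Fin t → V := fun a => c (e a) ℓ0 with hφ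
  -- injectivity of φ
  have hφinj : Function.Injective φ := by
    intro a b hab
    by_contra hne
    have heab : (e a : Fin r) ≠ (e b : Fin r) := by
      intro hcon
      exact hne (e.injective (Subtype.ext hcon))
    obtain ⟨_, hadj⟩ := (lev (e a) (e b) heab).2
    exact hadj.2.2.1 ℓ0 ℓ0 hℓ0ne hℓ0ne hab
  -- rich pairs
  have hRichPairs : ∀ a b : Fin t, a < b → ∃ i j : ℕ, i < k ∧ j < k ∧
      (Rich G k h K δ i j (φ a) (φ b) ∨ Rich G k h K δ i j (φ b) (φ a)) := by
    intro a b hab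
    have heab : (e a : Fin r) < (e b : Fin r) := by
      exact e.lt_iff_lt.mpr hab
    have hne : (e a : Fin r) ≠ (e b : Fin r) := ne_of_lt heab
    have hχval : χ (e a) (e b) = col := hmono (e a) (e a).2 (e b) (e b).2 hne
    have hχval2 : ((lev (e a) (e b) hne).1 : ℕ) - 1 = (col : ℕ) := by
      rw [hχ] at hχval
      simp only [heab, dif_pos] at hχval
      have := congrArg Fin.val hχval
      simpa using this
    have hlev1 : 1 ≤ ((lev (e a) (e b) hne).1 : ℕ) := (lev (e a) (e b) hne).2.1
    have hleveq : (lev (e a) (e b) hne).1 = ℓ0 := by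
      apply Fin.ext
      simp only [hℓ0]
      omega
    have hadj := (lev (e a) (e b) hne).2.2
    rw [hleveq] at hadj
    obtain ⟨_, _, _, i, j, hi, hj, hrich⟩ := hadj
    exact ⟨i, j, hi, hj, hrich⟩
  -- the building induction
  have hle_sum : ∀ m' : Fin t → Fin t → ℕ, (∀ a b, m' a b ≤ m a b) →
      (∑ p : Fin t × Fin t, if p.1 < p.2 then m' p.1 p.2 else 0) ≤
      (∑ p : Fin t × Fin t, if p.1 < p.2 then m p.1 p.2 else 0) := by
    intro m' hle
    apply Finset.sum_le_sum
    intro p _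
    by_cases hp : p.1 < p.2 <;> simp [hp, hle p.1 p.2]
  have build : ∀ (E : ℕ) (m' : Fin t → Fin t → ℕ),
      (∀ a b, m' a b ≤ m a b) →
      (∑ p : Fin t × Fin t, if p.1 < p.2 then m' p.1 p.2 else 0) = E →
      ∃ π : (a : Fin t) → (b : Fin t) → Fin (m' a b) → (ℕ → V),
        (∀ a b, a < b → ∀ c', PathSeq G (2 * k) (π a b c') ∧ π a b c' 0 = φ a ∧
          π a b c' (2 * k) = φ b) ∧
        (∀ a b, a < b → ∀ c', ∀ i, 0 < i → i < 2 * k → ∀ d, π a b c' i ≠ φ d) ∧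
        (∀ a b, a < b → ∀ a' b', a' < b' → ∀ (c' : Fin (m' a b)) (c'' : Fin (m' a' b')),
          (a, b, (c' : ℕ)) ≠ (a', b', (c'' : ℕ)) →
          ∀ i i', 0 < i → i < 2 * k → 0 < i' → i' < 2 * k → π a b c' i ≠ π a' b' c'' i') ∧
        ({w | ∃ a b, a < b ∧ ∃ (c' : Fin (m' a b)) (i : ℕ), 0 < i ∧ i < 2 * k ∧
          π a b c' i = w}.ncard ≤ (2 * k - 1) * E) := by
    intro E
    induction E with
    | zero =>
      intro m' hle hsum
      have hz : ∀ a b : Fin t, a < b → m' a b = 0 := by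
        intro a b hab
        have := Finset.sum_eq_zero_iff.mp hsum (a, b) (Finset.mem_univ _)
        simpa [hab] using this
      refine ⟨fun _ _ _ _ => v, ?_, ?_, ?_, ?_⟩
      · intro a b hab c'
        exact absurd c'.2 (by have := hz a b hab; omega)
      · intro a b hab c'
        exact absurd c'.2 (by have := hz a b hab; omega)
      · intro a b hab a' b' hab' c' c''
        exact absurd c'.2 (by have := hz a b hab; omega)
      · have : {w | ∃ a b, a < b ∧ ∃ (c' : Fin (m' a b)) (i : ℕ), 0 < i ∧ i < 2 * k ∧
            (fun _ => v) i = w} = ∅ := by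
          ext w
          simp only [Set.mem_setOf_eq, Set.mem_empty_iff_false, iff_false]
          rintro ⟨a, b, hab, c', _⟩
          exact absurd c'.2 (by have := hz a b hab; omega)
        rw [this]
        simp
    | succ E ih =>
      intro m' hle hsum
      -- find a pair with positive multiplicity
      have hpos : ∃ a0 b0 : Fin t, a0 < b0 ∧ 0 < m' a0 b0 := by
        by_contra hcon
        push_neg at hcon
        have : (∑ p : Fin t × Fin t, if p.1 < p.2 then m' p.1 p.2 else 0) = 0 := by
          apply Finset.sum_eq_zero
          intro p _
          by_cases hp : p.1 < p.2
          · simp only [hp, if_true]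
            exact Nat.le_zero.mp (hcon p.1 p.2 hp)
          · simp [hp]
        omega
      obtain ⟨a0, b0, hab0, hm0⟩ := hpos
      set m'' : Fin t → Fin t → ℕ := fun a b => if a = a0 ∧ b = b0 then m' a b - 1 else m' a b
        with hm''
      have hm''le : ∀ a b, m'' a b ≤ m a b := by
        intro a b
        rw [hm'']
        by_cases hab : a = a0 ∧ b = b0
        · simp only [hab, if_true]
          exact le_trans (Nat.sub_le _ _) (hle a0 b0)
        · simp only [hab, if_false]
          exact hle a b
      have hm''sum : (∑ p : Fin t × Fin t, if p.1 < p.2 then m'' p.1 p.2 else 0) = E := by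
        have key : ∀ mm : Fin t → Fin t → ℕ,
            (∑ p : Fin t × Fin t, if p.1 < p.2 then mm p.1 p.2 else 0) =
            (∑ p ∈ (Finset.univ : Finset (Fin t × Fin t)).erase (a0, b0),
              if p.1 < p.2 then mm p.1 p.2 else 0) + mm a0 b0 := by
          intro mm
          rw [← Finset.add_sum_erase _ _ (Finset.mem_univ (a0, b0))]
          simp [hab0]
          ring
        have h1 := key m'
        have h2 := key m''
        have h3 : (∑ p ∈ (Finset.univ : Finset (Fin t × Fin t)).erase (a0, b0),
              if p.1 < p.2 then m'' p.1 p.2 else 0) =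
            (∑ p ∈ (Finset.univ : Finset (Fin t × Fin t)).erase (a0, b0),
              if p.1 < p.2 then m' p.1 p.2 else 0) := by
          apply Finset.sum_congr rfl
          intro p hp
          have hpne : p ≠ (a0, b0) := Finset.ne_of_mem_erase hp
          have : ¬(p.1 = a0 ∧ p.2 = b0) := by
            intro hcon
            exact hpne (Prod.ext hcon.1 hcon.2)
          rw [hm'']
          simp only [this, if_false]
        have h4 : m'' a0 b0 = m' a0 b0 - 1 := by rw [hm'']; simp
        omega
      obtain ⟨π'', hc1, hc2, hc3, hc4⟩ := ih m'' hm''le hm''sum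
      set Int : Set V := {w | ∃ a b, a < b ∧ ∃ (c' : Fin (m'' a b)) (i : ℕ), 0 < i ∧ i < 2 * k ∧
          π'' a b c' i = w} with hInt
      set U : Set V := Set.range φ ∪ Int with hUdef
      have hUcard : U.ncard ≤ h := by
        have h1 : (Set.range φ).ncard ≤ t := by
          rw [← Set.image_univ]
          calc (φ '' Set.univ).ncard ≤ (Set.univ : Set (Fin t)).ncard :=
              Set.ncard_image_le (Set.finite_univ)
            _ = t := by rw [Set.ncard_univ]; simp
        have h2 := Set.ncard_union_le (Set.range φ) Int
        have h3 : (2 * k - 1) * E ≤ (2 * k - 1) *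
            (∑ p : Fin t × Fin t, if p.1 < p.2 then m p.1 p.2 else 0) := by
          apply Nat.mul_le_mul_left
          rw [← hm''sum]
          exact hle_sum m'' hm''le
        rw [hhdef, nH]
        have h5 : U.ncard = (Set.range φ ∪ Int).ncard := rfl
        have := hc4
        omega
      -- get the new path
      obtain ⟨i, j, hi, hj, hrich⟩ := hRichPairs a0 b0 hab0
      have hnew : ∃ q : ℕ → V, PathSeq G (2 * k) q ∧ q 0 = φ a0 ∧ q (2 * k) = φ b0 ∧
          ∀ s', 0 < s' → s' < 2 * k → q s' ∉ U := by
        rcases hrich with hrich | hrich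
        · exact ext_lemma G hK hδ hmax hk hi hj (Set.mem_union_left _ (Set.mem_range_self a0))
            (Set.mem_union_left _ (Set.mem_range_self b0)) hUcard hrich
        · obtain ⟨q, hq1, hq2, hq3, hq4⟩ := ext_lemma G hK hδ hmax hk hi hj
            (Set.mem_union_left _ (Set.mem_range_self b0))
            (Set.mem_union_left _ (Set.mem_range_self a0)) hUcard hrich
          refine ⟨fun s' => q (2 * k - s'), reverse_pathSeq G hq1, ?_, ?_, ?_⟩
          · simpa using hq3
          · simpa using hq2
          · intro s' h1 h2
            exact hq4 (2 * k - s') (by omega) (by omega)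
      obtain ⟨q, hq1, hq2, hq3, hq4⟩ := hnew
      -- assemble
      set π : (a : Fin t) → (b : Fin t) → Fin (m' a b) → (ℕ → V) := fun a b c' =>
        if hc : (c' : ℕ) < m'' a b then π'' a b ⟨c', hc⟩ else q with hπ
      have hcase : ∀ (a b : Fin t) (c' : Fin (m' a b)), ¬ ((c' : ℕ) < m'' a b) →
          a = a0 ∧ b = b0 ∧ (c' : ℕ) = m' a0 b0 - 1 := by
        intro a b c' hc
        by_cases hab : a = a0 ∧ b = b0
        · refine ⟨hab.1, hab.2, ?_⟩
          have := c'.2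
          rw [hm''] at hc
          simp only [hab, and_self, if_true] at hc
          obtain ⟨h1, h2⟩ := hab
          subst h1; subst h2
          omega
        · exfalso
          apply hc
          rw [hm'']
          simp only [hab, if_false]
          exact c'.2
      have hqInt : ∀ s', 0 < s' → s' < 2 * k → q s' ∉ Int := by
        intro s' h1 h2 hmem
        exact hq4 s' h1 h2 (Set.mem_union_right _ hmem)
      have hqφ : ∀ s', 0 < s' → s' < 2 * k → ∀ d, q s' ≠ φ d := by
        intro s' h1 h2 d heq
        exact hq4 s' h1 h2 (Set.mem_union_left _ (heq ▸ Set.mem_range_self d))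
      refine ⟨π, ?_, ?_, ?_, ?_⟩
      · intro a b hab c'
        rw [hπ]
        by_cases hc : (c' : ℕ) < m'' a b
        · simp only [hc, dif_pos]
          exact hc1 a b hab _
        · simp only [hc, dif_neg, not_false_iff]
          obtain ⟨ha, hb, _⟩ := hcase a b c' hc
          subst ha; subst hb
          exact ⟨hq1, hq2, hq3⟩
      · intro a b hab c' i' hi1 hi2 d
        rw [hπ]
        by_cases hc : (c' : ℕ) < m'' a b
        · simp only [hc, dif_pos]
          exact hc2 a b hab _ i' hi1 hi2 d
        · simp only [hc, dif_neg, not_false_iff]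
          exact hqφ i' hi1 hi2 d
      · intro a b hab a' b' hab' c' c'' hne i' i'' h1 h2 h3 h4
        rw [hπ]
        by_cases hc : (c' : ℕ) < m'' a b <;> by_cases hc' : (c'' : ℕ) < m'' a' b' <;>
          simp only [hc, hc', dif_pos, dif_neg, not_false_iff]
        · exact hc3 a b hab a' b' hab' _ _ (by simpa using hne) i' i'' h1 h2 h3 h4
        · intro heq
          exact hqInt i'' h3 h4 ⟨a, b, hab, ⟨c', hc⟩, i', h1, h2, heq⟩
        · intro heq
          exact hqInt i' h1 h2 ⟨a', b', hab', ⟨c'', hc'⟩, i'', h3, h4, heq.symm⟩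
        · exfalso
          obtain ⟨ha, hb, hcv⟩ := hcase a b c' hc
          obtain ⟨ha', hb', hcv'⟩ := hcase a' b' c'' hc'
          subst ha; subst hb; subst ha'; subst hb'
          apply hne
          simp only [Prod.mk.injEq]
          exact ⟨trivial, trivial, by omega⟩
      · have hsub : {w | ∃ a b, a < b ∧ ∃ (c' : Fin (m' a b)) (i' : ℕ), 0 < i' ∧ i' < 2 * k ∧
            π a b c' i' = w} ⊆ Int ∪ (q '' Set.Ioo 0 (2 * k)) := by
          rintro w ⟨a, b, hab, c', i', h1, h2, heq⟩
          rw [hπ] at heq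
          by_cases hc : (c' : ℕ) < m'' a b
          · simp only [hc, dif_pos] at heq
            exact Or.inl ⟨a, b, hab, ⟨c', hc⟩, i', h1, h2, heq⟩
          · simp only [hc, dif_neg, not_false_iff] at heq
            exact Or.inr ⟨i', ⟨h1, h2⟩, heq⟩
        calc ({w | ∃ a b, a < b ∧ ∃ (c' : Fin (m' a b)) (i' : ℕ), 0 < i' ∧ i' < 2 * k ∧
              π a b c' i' = w}).ncard
            ≤ (Int ∪ (q '' Set.Ioo 0 (2 * k))).ncard := Set.ncard_le_ncard hsub (Set.toFinite _)
          _ ≤ Int.ncard + (q '' Set.Ioo 0 (2 * k)).ncard := Set.ncard_union_le _ _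
          _ ≤ (2 * k - 1) * E + (2 * k - 1) := by
              have himg : (q '' Set.Ioo 0 (2 * k)).ncard ≤ 2 * k - 1 := by
                calc (q '' Set.Ioo 0 (2 * k)).ncard ≤ (Set.Ioo 0 (2 * k)).ncard :=
                    Set.ncard_image_le (Set.finite_Ioo _ _)
                  _ = 2 * k - 1 := by
                      rw [← Finset.coe_Ioo, Set.ncard_coe_finset, Nat.card_Ioo]
                      omega
              omega
          _ = (2 * k - 1) * (E + 1) := by ring
  -- conclude
  obtain ⟨π, hc1, hc2, hc3, _⟩ := build
    (∑ p : Fin t × Fin t, if p.1 < p.2 then m p.1 p.2 else 0) m (fun _ _ => le_rfl) rfl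
  exact hHfree ⟨φ, π, hφinj, hc1, hc2, hc3⟩
end

section
/- Let F be a multigraph with t vertices, let k ≥ 1 and K ≥ 1, let H = F^{2k-1}, and let r = R_k(t) be the k-colour Ramsey number of t. Let G be an H-free K-almost-regular graph on n vertices with minimum degree δ > 0, and let S ⊆ V(G) satisfy |S| ≥ 2nr/δ^k. Then there are at least |S|²δ^{2k}/(4r²n) vectors (u_{−k}, u_{−k+1}, …, u_k) ∈ V(G)^{2k+1} such that (i) u_{−k} ∈ S and u_k ∈ S, (ii) u_ℓ is adjacent to u_{ℓ+1} in G for every −k ≤ ℓ ≤ k−1, and (iii) the pair (u_{−ℓ}, u_ℓ) is (i,j)-poor (with parameters k, h = |V(H)|, K, δ) for every 1 ≤ ℓ ≤ k and every 0 ≤ i, j ≤ k−1. -/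
set_option linter.unusedSectionVars false
set_option maxHeartbeats 1000000


open SimpleGraph

variable {V : Type*} [Fintype V] [DecidableEq V]

section AuxLemmas
open Finset
open scoped Classical
namespace PF
open Finset
open scoped Classical

variable (G : SimpleGraph V)

noncomputable def NF (v : V) : Finset V := (G.neighborSet v).toFinset

lemma mem_NF {v z : V} : z ∈ NF G v ↔ G.Adj v z := by simp [NF]

lemma card_NF (v : V) : (NF G v).card = (G.neighborSet v).ncard :=
  (Set.ncard_eq_toFinset_card' _).symm

lemma minDeg_le_card_NF (v : V) : minDeg G ≤ (NF G v).card := by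
  rw [card_NF]; exact Nat.sInf_le ⟨v, rfl⟩

lemma card_NF_le_maxDeg (v : V) : (NF G v).card ≤ maxDeg G := by
  rw [card_NF]
  refine le_csSup ⟨Fintype.card V, ?_⟩ ⟨v, rfl⟩
  rintro d ⟨w, rfl⟩
  exact le_trans (Set.ncard_le_ncard (Set.subset_univ _) Set.finite_univ)
    (le_of_eq (by rw [Set.ncard_univ, Nat.card_eq_fintype_card]))

/-- value of a tuple at a natural index (clipped). -/
def tup {ℓ : ℕ} (q : Fin (ℓ+1) → V) (s : ℕ) : V :=
  q ⟨min s ℓ, Nat.lt_succ_of_le (min_le_right s ℓ)⟩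

lemma tup_eq {ℓ : ℕ} (q : Fin (ℓ+1) → V) {s : ℕ} (hs : s ≤ ℓ) :
    tup q s = q ⟨s, Nat.lt_succ_of_le hs⟩ := by
  unfold tup; congr 1; exact Fin.ext (by simp [Nat.min_eq_left hs])

lemma tup_fin {ℓ : ℕ} (q : Fin (ℓ+1) → V) (a : Fin (ℓ+1)) :
    tup q (a : ℕ) = q a := by
  rw [tup_eq q (by omega : (a:ℕ) ≤ ℓ)]

lemma tup_ext {ℓ : ℕ} {q q' : Fin (ℓ+1) → V} (h : ∀ s, s ≤ ℓ → tup q s = tup q' s) :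
    q = q' := by
  funext a
  have := h a (by omega)
  rwa [tup_fin, tup_fin] at this

/-- tuple walk predicate -/
def TWalk (ℓ : ℕ) (q : Fin (ℓ+1) → V) : Prop :=
  ∀ s, s < ℓ → G.Adj (tup q s) (tup q (s+1))

noncomputable def WFrom (ℓ : ℕ) (x : V) : Finset (Fin (ℓ+1) → V) :=
  univ.filter (fun q => TWalk G ℓ q ∧ tup q 0 = x)

lemma mem_WFrom {ℓ : ℕ} {x : V} {q : Fin (ℓ+1) → V} :
    q ∈ WFrom G ℓ x ↔ TWalk G ℓ q ∧ tup q 0 = x := by simp [WFrom]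

def dropT {ℓ : ℕ} (q : Fin (ℓ+2) → V) : Fin (ℓ+1) → V := fun a => q a.castSucc

lemma tup_dropT {ℓ : ℕ} (q : Fin (ℓ+2) → V) {s : ℕ} (hs : s ≤ ℓ) :
    tup (dropT q) s = tup q s := by
  rw [tup_eq _ hs, tup_eq _ (by omega : s ≤ ℓ+1)]
  rfl

def snocT {ℓ : ℕ} (q : Fin (ℓ+1) → V) (z : V) : Fin (ℓ+2) → V :=
  fun a => if h : (a:ℕ) ≤ ℓ then q ⟨a, Nat.lt_succ_of_le h⟩ else z

lemma tup_snocT_le {ℓ : ℕ} (q : Fin (ℓ+1) → V) (z : V) {s : ℕ} (hs : s ≤ ℓ) :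
    tup (snocT q z) s = tup q s := by
  rw [tup_eq _ (by omega : s ≤ ℓ+1), tup_eq _ hs]
  simp only [snocT]
  rw [dif_pos hs]

lemma tup_snocT_last {ℓ : ℕ} (q : Fin (ℓ+1) → V) (z : V) :
    tup (snocT q z) (ℓ+1) = z := by
  rw [tup_eq _ (le_refl (ℓ+1))]
  simp only [snocT]
  rw [dif_neg (by omega)]

lemma dropT_snocT {ℓ : ℕ} (q : Fin (ℓ+1) → V) (z : V) : dropT (snocT q z) = q := by
  funext a
  simp only [dropT, snocT, Fin.coe_castSucc]
  rw [dif_pos (by omega : (a:ℕ) ≤ ℓ)]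

lemma snocT_eq {ℓ : ℕ} (q : Fin (ℓ+2) → V) :
    snocT (dropT q) (tup q (ℓ+1)) = q := by
  funext a
  simp only [snocT]
  by_cases h : (a:ℕ) ≤ ℓ
  · rw [dif_pos h]; rfl
  · have ha : (a:ℕ) = ℓ+1 := by have := a.isLt; omega
    rw [dif_neg h, tup_eq _ (le_refl _)]
    congr 1
    exact Fin.ext ha.symm

lemma card_WFrom_fiber {ℓ : ℕ} (x : V) (q : Fin (ℓ+1) → V) (hq : q ∈ WFrom G ℓ x) :
    ((WFrom G (ℓ+1) x).filter (fun q' => dropT q' = q)).card = (NF G (tup q ℓ)).card := by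
  rw [mem_WFrom] at hq
  apply card_bij' (i := fun q' _ => tup q' (ℓ+1)) (j := fun z _ => snocT q z)
  · intro q' hq'
    simp only [mem_filter, mem_WFrom] at hq'
    rw [mem_NF]
    have h1 := hq'.1.1 ℓ (by omega)
    rwa [← hq'.2, tup_dropT _ (le_refl ℓ)]
  · intro z hz
    rw [mem_NF] at hz
    simp only [mem_filter, mem_WFrom]
    refine ⟨⟨?_, ?_⟩, dropT_snocT q z⟩
    · intro s hs
      rcases Nat.lt_or_ge s ℓ with h | h
      · rw [tup_snocT_le _ _ (by omega), tup_snocT_le _ _ (by omega)]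
        exact hq.1 s h
      · have hsl : s = ℓ := by omega
        rw [hsl, tup_snocT_le _ _ (le_refl _), tup_snocT_last]
        exact hz
    · rw [tup_snocT_le _ _ (by omega)]; exact hq.2
  · intro q' hq'
    simp only [mem_filter] at hq'
    rw [← hq'.2]
    exact snocT_eq q'
  · intro z _
    exact tup_snocT_last q z

lemma card_WFrom_le (ℓ : ℕ) (x : V) : (WFrom G ℓ x).card ≤ (maxDeg G)^ℓ := by
  induction ℓ generalizing x with
  | zero =>
    simp only [pow_zero]
    apply card_le_one.mpr
    intro q hq q' hq'
    rw [mem_WFrom] at hq hq'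
    apply tup_ext
    intro s hs
    interval_cases s
    rw [hq.2, hq'.2]
  | succ ℓ ih =>
    rw [card_eq_sum_card_fiberwise (f := dropT) (t := WFrom G ℓ x) ?mapsto]
    case mapsto =>
      intro q' hq'
      rw [mem_coe, mem_WFrom] at hq' ⊢
      constructor
      · intro s hs
        rw [tup_dropT _ (by omega), tup_dropT _ (by omega)]
        exact hq'.1 s (by omega)
      · rw [tup_dropT _ (by omega)]; exact hq'.2
    calc ∑ q ∈ WFrom G ℓ x, ((WFrom G (ℓ+1) x).filter (fun q' => dropT q' = q)).card
        ≤ (WFrom G ℓ x).card • maxDeg G := by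
          apply sum_le_card_nsmul
          intro q hq
          rw [card_WFrom_fiber G x q hq]
          exact card_NF_le_maxDeg G _
      _ ≤ (maxDeg G)^ℓ * maxDeg G := by rw [smul_eq_mul]; exact Nat.mul_le_mul_right _ (ih x)
      _ = (maxDeg G)^(ℓ+1) := by ring

lemma card_WFrom_ge (ℓ : ℕ) (x : V) : (minDeg G)^ℓ ≤ (WFrom G ℓ x).card := by
  induction ℓ generalizing x with
  | zero =>
    simp only [pow_zero]
    rw [Nat.one_le_iff_ne_zero, ← Nat.pos_iff_ne_zero, card_pos]
    refine ⟨fun _ => x, ?_⟩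
    rw [mem_WFrom]
    exact ⟨fun s hs => absurd hs (by omega), rfl⟩
  | succ ℓ ih =>
    rw [card_eq_sum_card_fiberwise (f := dropT) (t := WFrom G ℓ x) ?mapsto]
    case mapsto =>
      intro q' hq'
      rw [mem_coe, mem_WFrom] at hq' ⊢
      constructor
      · intro s hs
        rw [tup_dropT _ (by omega), tup_dropT _ (by omega)]
        exact hq'.1 s (by omega)
      · rw [tup_dropT _ (by omega)]; exact hq'.2
    calc (minDeg G)^(ℓ+1) = (minDeg G)^ℓ * minDeg G := by ring
      _ ≤ (WFrom G ℓ x).card • minDeg G := by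
          rw [smul_eq_mul]; exact Nat.mul_le_mul_right _ (ih x)
      _ ≤ _ := by
          apply card_nsmul_le_sum
          intro q hq
          rw [card_WFrom_fiber G x q hq]
          exact minDeg_le_card_NF G _

end PF

section C2
open Finset
open scoped Classical
namespace PF
variable {V : Type*} [Fintype V] [DecidableEq V] (G : SimpleGraph V)

lemma tup_mk {ℓ : ℕ} (F : ℕ → V) {s : ℕ} (hs : s ≤ ℓ) :
    tup (fun a : Fin (ℓ+1) => F (a:ℕ)) s = F s := by
  rw [tup_eq _ hs]

lemma card_WFrom_pinned_le (ℓ s : ℕ) (x z : V) (hs1 : 1 ≤ s) (hs2 : s ≤ ℓ) :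
    ((WFrom G ℓ x).filter (fun q => tup q s = z)).card ≤ (maxDeg G)^(ℓ-1) := by
  have key : ((WFrom G ℓ x).filter (fun q => tup q s = z)).card ≤
      ((WFrom G (s-1) x) ×ˢ (WFrom G (ℓ-s) z)).card := by
    apply card_le_card_of_injOn
      (fun q => ((fun a : Fin ((s-1)+1) => tup q (a:ℕ)), (fun a : Fin ((ℓ-s)+1) => tup q (s + (a:ℕ)))))
    · intro q hq
      simp only [mem_coe, mem_filter, mem_WFrom] at hq
      obtain ⟨⟨hw, h0⟩, hz⟩ := hq
      rw [mem_coe, mem_product, mem_WFrom, mem_WFrom]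
      refine ⟨⟨?_, ?_⟩, ?_, ?_⟩
      · intro u hu
        dsimp only
        rw [tup_mk (fun n => tup q n) (by omega : u ≤ s-1),
          tup_mk (fun n => tup q n) (by omega : u+1 ≤ s-1)]
        exact hw u (by omega)
      · dsimp only
        rw [tup_mk (fun n => tup q n) (by omega : 0 ≤ s-1)]; exact h0
      · intro u hu
        dsimp only
        rw [tup_mk (fun n => tup q (s+n)) (by omega : u ≤ ℓ - s),
          tup_mk (fun n => tup q (s+n)) (by omega : u+1 ≤ ℓ - s)]
        have h3 : s + u + 1 = s + (u+1) := by omega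
        rw [← h3]
        exact hw (s+u) (by omega)
      · dsimp only
        rw [tup_mk (fun n => tup q (s+n)) (by omega : 0 ≤ ℓ - s)]
        have h3 : s + 0 = s := by omega
        rw [h3]; exact hz
    · intro q hq q' hq' heq
      simp only [coe_filter, Set.mem_setOf_eq, mem_WFrom] at hq hq'
      have h1 := congrArg Prod.fst heq
      have h2 := congrArg Prod.snd heq
      simp only at h1 h2
      apply tup_ext
      intro u hu
      rcases Nat.lt_or_ge u s with h | h
      · have := congrFun h1 ⟨u, by omega⟩
        simpa using this
      · have := congrFun h2 ⟨u - s, by omega⟩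
        simp only at this
        have hsu : s + (u - s) = u := by omega
        rwa [hsu] at this
  calc _ ≤ ((WFrom G (s-1) x) ×ˢ (WFrom G (ℓ-s) z)).card := key
    _ = (WFrom G (s-1) x).card * (WFrom G (ℓ-s) z).card := card_product _ _
    _ ≤ (maxDeg G)^(s-1) * (maxDeg G)^(ℓ-s) :=
        Nat.mul_le_mul (card_WFrom_le G _ x) (card_WFrom_le G _ z)
    _ = (maxDeg G)^(ℓ-1) := by rw [← pow_add]; congr 1; omega

noncomputable def WTo (ℓ : ℕ) (y : V) : Finset (Fin (ℓ+1) → V) :=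
  univ.filter (fun q => TWalk G ℓ q ∧ tup q ℓ = y)

lemma mem_WTo {ℓ : ℕ} {y : V} {q : Fin (ℓ+1) → V} :
    q ∈ WTo G ℓ y ↔ TWalk G ℓ q ∧ tup q ℓ = y := by simp [WTo]

def revT {ℓ : ℕ} (q : Fin (ℓ+1) → V) : Fin (ℓ+1) → V :=
  fun a => q ⟨ℓ - (a:ℕ), by omega⟩

lemma tup_revT {ℓ : ℕ} (q : Fin (ℓ+1) → V) {s : ℕ} (hs : s ≤ ℓ) :
    tup (revT q) s = tup q (ℓ - s) := by
  rw [tup_eq _ hs, tup_eq _ (by omega : ℓ - s ≤ ℓ)]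
  rfl

lemma revT_revT {ℓ : ℕ} (q : Fin (ℓ+1) → V) : revT (revT q) = q := by
  funext a
  simp only [revT]
  congr 1
  exact Fin.ext (by have := a.isLt; simp; omega)

lemma TWalk_revT {ℓ : ℕ} {q : Fin (ℓ+1) → V} (hq : TWalk G ℓ q) : TWalk G ℓ (revT q) := by
  intro u hu
  rw [tup_revT _ (by omega), tup_revT _ (by omega)]
  have h1 := hq (ℓ - (u+1)) (by omega)
  have h2 : ℓ - (u+1) + 1 = ℓ - u := by omega
  rw [h2] at h1
  exact h1.symm

lemma card_WTo_ge (ℓ : ℕ) (y : V) : (minDeg G)^ℓ ≤ (WTo G ℓ y).card := by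
  have : (WFrom G ℓ y).card = (WTo G ℓ y).card := by
    apply card_bij' (i := fun q _ => revT q) (j := fun q _ => revT q)
    · intro q hq
      rw [mem_WFrom] at hq
      rw [mem_WTo]
      refine ⟨TWalk_revT G hq.1, ?_⟩
      rw [tup_revT _ (le_refl ℓ)]
      simpa using hq.2
    · intro q hq
      rw [mem_WTo] at hq
      rw [mem_WFrom]
      refine ⟨TWalk_revT G hq.1, ?_⟩
      rw [tup_revT _ (by omega)]
      simpa using hq.2
    · intro q _; exact revT_revT q
    · intro q _; exact revT_revT q
  rw [← this]
  exact card_WFrom_ge G ℓ y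

end PF
end C2
section C3
open Finset
open scoped Classical
namespace PF
variable {V : Type*} [Fintype V] [DecidableEq V] (G : SimpleGraph V)

lemma cross_piece_le (i j : ℕ) (x y : V) (s s' : ℕ) (hs : s ≤ i) (hs'1 : 1 ≤ s') (hs'2 : s' ≤ j) :
    (((WFrom G i x) ×ˢ (WFrom G j y)).filter (fun pq => tup pq.1 s = tup pq.2 s')).card ≤
      (maxDeg G)^i * (maxDeg G)^(j-1) := by
  rw [card_eq_sum_card_fiberwise (f := Prod.fst) (t := WFrom G i x)
    (fun pq hpq => (mem_product.mp (mem_filter.mp hpq).1).1)]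
  calc _ ≤ (WFrom G i x).card • ((maxDeg G)^(j-1)) := by
        apply sum_le_card_nsmul
        intro P hP
        have : ((((WFrom G i x) ×ˢ (WFrom G j y)).filter (fun pq => tup pq.1 s = tup pq.2 s')).filter
            (fun pq => pq.1 = P)).card ≤
            ((WFrom G j y).filter (fun q => tup q s' = tup P s)).card := by
          apply card_le_card_of_injOn (fun pq => pq.2)
          · intro pq hpq
            simp only [mem_coe, mem_filter, mem_product] at hpq ⊢
            refine ⟨hpq.1.1.2, ?_⟩
            rw [← hpq.2]
            exact hpq.1.2.symm
          · intro pq hpq pq' hpq' h2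
            simp only [coe_filter, Set.mem_setOf_eq] at hpq hpq'
            exact Prod.ext (hpq.2.trans hpq'.2.symm) h2
        exact le_trans this (card_WFrom_pinned_le G j s' y (tup P s) hs'1 hs'2)
    _ ≤ (maxDeg G)^i * (maxDeg G)^(j-1) := by
        rw [smul_eq_mul]
        exact Nat.mul_le_mul_right _ (card_WFrom_le G i x)

lemma exists_good_pair (k hh : ℕ) (Kr dr : ℝ)
    (hmax : (maxDeg G : ℝ) ≤ Kr * dr) (hh1 : 1 ≤ hh) (hk : 1 ≤ k)
    {i j : ℕ} (hi : i < k) (hj : j < k) {x y : V}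
    (hrich : Rich G k hh Kr dr i j x y)
    (B : Finset V) (hB : B.card ≤ hh) :
    ∃ PQ : (ℕ → V) × (ℕ → V),
      (PathSeq G i PQ.1 ∧ PQ.1 0 = x ∧ PadSeq i PQ.1 ∧
        PathSeq G j PQ.2 ∧ PQ.2 0 = y ∧ PadSeq j PQ.2 ∧
        ManyDisjointPaths G (2 * k - i - j) (PQ.1 i) (PQ.2 j) ((hh + 2) * (2 * k + 1) + 1)) ∧
      (∀ s, 1 ≤ s → s ≤ i → PQ.1 s ∉ B ∧ PQ.1 s ≠ x ∧ PQ.1 s ≠ y) ∧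
      (∀ s', 1 ≤ s' → s' ≤ j → PQ.2 s' ∉ B ∧ PQ.2 s' ≠ x ∧ PQ.2 s' ≠ y) ∧
      (∀ s s', s ≤ i → 1 ≤ s' → s' ≤ j → PQ.1 s ≠ PQ.2 s') := by
  classical
  obtain ⟨hxy, hcount⟩ := hrich
  set RS := {PQ : (ℕ → V) × (ℕ → V) |
      PathSeq G i PQ.1 ∧ PQ.1 0 = x ∧ PadSeq i PQ.1 ∧
      PathSeq G j PQ.2 ∧ PQ.2 0 = y ∧ PadSeq j PQ.2 ∧
      ManyDisjointPaths G (2 * k - i - j) (PQ.1 i) (PQ.2 j) ((hh + 2) * (2 * k + 1) + 1)} with hRS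
  by_contra hcon
  -- every element of RS is "bad"
  have hbad : ∀ PQ ∈ RS, (∃ s, 1 ≤ s ∧ s ≤ i ∧ (PQ.1 s ∈ B ∨ PQ.1 s = x ∨ PQ.1 s = y)) ∨
      (∃ s', 1 ≤ s' ∧ s' ≤ j ∧ (PQ.2 s' ∈ B ∨ PQ.2 s' = x ∨ PQ.2 s' = y)) ∨
      (∃ s s', s ≤ i ∧ 1 ≤ s' ∧ s' ≤ j ∧ PQ.1 s = PQ.2 s') := by
    intro PQ hPQ
    by_contra hb
    push_neg at hb
    exact hcon ⟨PQ, hPQ, hb.1, hb.2.1, hb.2.2⟩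
  set Bfin : Finset V := B ∪ {x, y} with hBfin
  have hBfincard : Bfin.card ≤ hh + 2 := by
    calc Bfin.card ≤ B.card + ({x, y} : Finset V).card := card_union_le _ _
      _ ≤ hh + 2 := by
          have : ({x, y} : Finset V).card ≤ 2 :=
            le_trans (card_insert_le _ _) (by simp)
          omega
  set BadT : Finset ((Fin (i+1) → V) × (Fin (j+1) → V)) :=
    ((WFrom G i x) ×ˢ (WFrom G j y)).filter (fun pq =>
      (∃ s, 1 ≤ s ∧ s ≤ i ∧ tup pq.1 s ∈ Bfin) ∨
      (∃ s', 1 ≤ s' ∧ s' ≤ j ∧ tup pq.2 s' ∈ Bfin) ∨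
      (∃ s s', s ≤ i ∧ 1 ≤ s' ∧ s' ≤ j ∧ tup pq.1 s = tup pq.2 s')) with hBadT
  -- RS injects into BadT
  have hinj : RS.ncard ≤ BadT.card := by
    rw [← Set.ncard_coe_finset]
    apply Set.ncard_le_ncard_of_injOn
      (fun PQ => ((fun a : Fin (i+1) => PQ.1 (a:ℕ)), (fun a : Fin (j+1) => PQ.2 (a:ℕ))))
    · intro PQ hPQ
      have hbad' := hbad PQ hPQ
      obtain ⟨hP, hP0, hPpad, hQ, hQ0, hQpad, _⟩ := hPQ
      refine Finset.mem_coe.mpr ?_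
      rw [hBadT, mem_filter, mem_product, mem_WFrom, mem_WFrom]
      refine ⟨⟨⟨?_, ?_⟩, ?_, ?_⟩, ?_⟩
      · intro s hs
        rw [tup_mk (fun n => PQ.1 n) (by omega), tup_mk (fun n => PQ.1 n) (by omega)]
        exact hP.1 s hs
      · rw [tup_mk (fun n => PQ.1 n) (by omega)]; exact hP0
      · intro s hs
        rw [tup_mk (fun n => PQ.2 n) (by omega), tup_mk (fun n => PQ.2 n) (by omega)]
        exact hQ.1 s hs
      · rw [tup_mk (fun n => PQ.2 n) (by omega)]; exact hQ0
      · rcases hbad' with ⟨s, h1, h2, h3⟩ | ⟨s', h1, h2, h3⟩ | ⟨s, s', h1, h2, h3, h4⟩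
        · left
          refine ⟨s, h1, h2, ?_⟩
          rw [tup_mk (fun n => PQ.1 n) (by omega)]
          rcases h3 with h | h | h
          · exact mem_union_left _ h
          · rw [h]; exact mem_union_right _ (by simp)
          · rw [h]; exact mem_union_right _ (by simp)
        · right; left
          refine ⟨s', h1, h2, ?_⟩
          rw [tup_mk (fun n => PQ.2 n) (by omega)]
          rcases h3 with h | h | h
          · exact mem_union_left _ h
          · rw [h]; exact mem_union_right _ (by simp)
          · rw [h]; exact mem_union_right _ (by simp)
        · right; right
          refine ⟨s, s', h1, h2, h3, ?_⟩
          rw [tup_mk (fun n => PQ.1 n) (by omega), tup_mk (fun n => PQ.2 n) (by omega)]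
          exact h4
    · intro PQ hPQ PQ' hPQ' heq
      obtain ⟨_, _, hPpad, _, _, hQpad, _⟩ := hPQ
      obtain ⟨_, _, hPpad', _, _, hQpad', _⟩ := hPQ'
      have h1 := congrArg Prod.fst heq
      have h2 := congrArg Prod.snd heq
      simp only at h1 h2
      have e1 : PQ.1 = PQ'.1 := by
        funext s
        rcases le_or_gt s i with h | h
        · simpa using congrFun h1 ⟨s, by omega⟩
        · have a1 := hPpad s (by omega)
          have a2 := hPpad' s (by omega)
          rw [a1, a2]
          simpa using congrFun h1 ⟨i, by omega⟩
      have e2 : PQ.2 = PQ'.2 := by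
        funext s
        rcases le_or_gt s j with h | h
        · simpa using congrFun h2 ⟨s, by omega⟩
        · have a1 := hQpad s (by omega)
          have a2 := hQpad' s (by omega)
          rw [a1, a2]
          simpa using congrFun h2 ⟨j, by omega⟩
      exact Prod.ext e1 e2
  -- bound the size of BadT
  have hBadTbound : BadT.card ≤ ((hh+2)*(i+j) + (i+1)*j) * (maxDeg G)^(i+j-1) := by
    set U1 : Finset ((Fin (i+1) → V) × (Fin (j+1) → V)) :=
      (Bfin ×ˢ Icc 1 i).biUnion (fun zs =>
        ((WFrom G i x).filter (fun q => tup q zs.2 = zs.1)) ×ˢ WFrom G j y) with hU1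
    set U2 : Finset ((Fin (i+1) → V) × (Fin (j+1) → V)) :=
      (Bfin ×ˢ Icc 1 j).biUnion (fun zs =>
        (WFrom G i x) ×ˢ ((WFrom G j y).filter (fun q => tup q zs.2 = zs.1))) with hU2
    set U3 : Finset ((Fin (i+1) → V) × (Fin (j+1) → V)) :=
      (Icc 0 i ×ˢ Icc 1 j).biUnion (fun ss' =>
        ((WFrom G i x) ×ˢ (WFrom G j y)).filter (fun pq => tup pq.1 ss'.1 = tup pq.2 ss'.2)) with hU3
    have hsub : BadT ⊆ U1 ∪ U2 ∪ U3 := by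
      intro pq hpq
      rw [hBadT, mem_filter] at hpq
      obtain ⟨hmem, hcond⟩ := hpq
      rw [mem_product] at hmem
      rcases hcond with ⟨s, h1, h2, h3⟩ | ⟨s', h1, h2, h3⟩ | ⟨s, s', h1, h2, h3, h4⟩
      · apply mem_union_left; apply mem_union_left
        rw [hU1, mem_biUnion]
        exact ⟨(tup pq.1 s, s), by rw [mem_product]; exact ⟨h3, by rw [mem_Icc]; omega⟩,
          by rw [mem_product, mem_filter]; exact ⟨⟨hmem.1, rfl⟩, hmem.2⟩⟩
      · apply mem_union_left; apply mem_union_right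
        rw [hU2, mem_biUnion]
        exact ⟨(tup pq.2 s', s'), by rw [mem_product]; exact ⟨h3, by rw [mem_Icc]; omega⟩,
          by rw [mem_product, mem_filter]; exact ⟨hmem.1, ⟨hmem.2, rfl⟩⟩⟩
      · apply mem_union_right
        rw [hU3, mem_biUnion]
        exact ⟨(s, s'), by rw [mem_product, mem_Icc, mem_Icc]; omega,
          by rw [mem_filter, mem_product]; exact ⟨hmem, h4⟩⟩
    have hc1 : U1.card ≤ (hh+2) * i * (maxDeg G)^(i+j-1) := by
      calc U1.card ≤ ∑ zs ∈ Bfin ×ˢ Icc 1 i,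
            (((WFrom G i x).filter (fun q => tup q zs.2 = zs.1)) ×ˢ WFrom G j y).card :=
          card_biUnion_le
        _ ≤ (Bfin ×ˢ Icc 1 i).card • ((maxDeg G)^(i+j-1)) := by
            apply sum_le_card_nsmul
            intro zs hzs
            rw [mem_product, mem_Icc] at hzs
            rw [card_product]
            calc _ ≤ (maxDeg G)^(i-1) * (maxDeg G)^j :=
                Nat.mul_le_mul (card_WFrom_pinned_le G i zs.2 x zs.1 hzs.2.1 hzs.2.2)
                  (card_WFrom_le G j y)
              _ = (maxDeg G)^(i+j-1) := by rw [← pow_add]; congr 1; omega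
        _ ≤ (hh+2) * i * (maxDeg G)^(i+j-1) := by
            rw [smul_eq_mul]
            apply Nat.mul_le_mul_right
            rw [card_product, Nat.card_Icc]
            exact Nat.mul_le_mul hBfincard (by omega)
    have hc2 : U2.card ≤ (hh+2) * j * (maxDeg G)^(i+j-1) := by
      calc U2.card ≤ ∑ zs ∈ Bfin ×ˢ Icc 1 j,
            ((WFrom G i x) ×ˢ ((WFrom G j y).filter (fun q => tup q zs.2 = zs.1))).card :=
          card_biUnion_le
        _ ≤ (Bfin ×ˢ Icc 1 j).card • ((maxDeg G)^(i+j-1)) := by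
            apply sum_le_card_nsmul
            intro zs hzs
            rw [mem_product, mem_Icc] at hzs
            rw [card_product]
            calc _ ≤ (maxDeg G)^i * (maxDeg G)^(j-1) :=
                Nat.mul_le_mul (card_WFrom_le G i x)
                  (card_WFrom_pinned_le G j zs.2 y zs.1 hzs.2.1 hzs.2.2)
              _ = (maxDeg G)^(i+j-1) := by rw [← pow_add]; congr 1; omega
        _ ≤ (hh+2) * j * (maxDeg G)^(i+j-1) := by
            rw [smul_eq_mul]
            apply Nat.mul_le_mul_right
            rw [card_product, Nat.card_Icc]
            exact Nat.mul_le_mul hBfincard (by omega)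
    have hc3 : U3.card ≤ (i+1) * j * (maxDeg G)^(i+j-1) := by
      calc U3.card ≤ ∑ ss' ∈ Icc 0 i ×ˢ Icc 1 j,
            (((WFrom G i x) ×ˢ (WFrom G j y)).filter
              (fun pq => tup pq.1 ss'.1 = tup pq.2 ss'.2)).card :=
          card_biUnion_le
        _ ≤ (Icc 0 i ×ˢ Icc 1 j).card • ((maxDeg G)^(i+j-1)) := by
            apply sum_le_card_nsmul
            intro ss' hss'
            rw [mem_product, mem_Icc, mem_Icc] at hss'
            calc _ ≤ (maxDeg G)^i * (maxDeg G)^(j-1) :=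
                cross_piece_le G i j x y ss'.1 ss'.2 hss'.1.2 hss'.2.1 hss'.2.2
              _ = (maxDeg G)^(i+j-1) := by rw [← pow_add]; congr 1; omega
        _ ≤ (i+1) * j * (maxDeg G)^(i+j-1) := by
            rw [smul_eq_mul]
            apply Nat.mul_le_mul_right
            rw [card_product, Nat.card_Icc, Nat.card_Icc]
            exact Nat.mul_le_mul (by omega) (by omega)
    have hsum : (hh+2)*i*(maxDeg G)^(i+j-1) + (hh+2)*j*(maxDeg G)^(i+j-1)
        + (i+1)*j*(maxDeg G)^(i+j-1) = ((hh+2)*(i+j) + (i+1)*j) * (maxDeg G)^(i+j-1) := by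
      ring
    calc BadT.card ≤ (U1 ∪ U2 ∪ U3).card := card_le_card hsub
      _ ≤ U1.card + U2.card + U3.card :=
          le_trans (card_union_le _ _) (by
            have := card_union_le U1 U2
            omega)
      _ ≤ ((hh+2)*(i+j) + (i+1)*j) * (maxDeg G)^(i+j-1) := by
          rw [← hsum]
          exact Nat.add_le_add (Nat.add_le_add hc1 hc2) hc3
  -- now get the real contradiction
  have hKd0 : (0:ℝ) ≤ Kr * dr := le_trans (by positivity) hmax
  have hfinal : (RS.ncard : ℝ) ≤
      ((2 * (i + j) * hh * (2 * k + 1) + 2 * (i + 1) * j : ℕ) : ℝ) *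
        (Kr * dr) ^ ((i : ℤ) + (j : ℤ) - 1) := by
    rcases Nat.eq_zero_or_pos (i + j) with hij | hij
    · have hi0 : i = 0 := by omega
      have hj0 : j = 0 := by omega
      subst hi0; subst hj0
      -- BadT is empty
      have : BadT.card = 0 := by
        rw [card_eq_zero]
        rw [hBadT]
        rw [filter_eq_empty_iff]
        intro pq _
        push_neg
        refine ⟨fun s h1 h2 => by omega, fun s' h1 h2 => by omega,
          fun s s' h1 h2 h3 => by omega⟩
      have h0 : RS.ncard = 0 := by omega
      rw [h0]
      simp only [Nat.cast_zero]
      have : (2 * (0 + 0) * hh * (2 * k + 1) + 2 * (0 + 1) * 0 : ℕ) = 0 := by ring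
      rw [this]
      simp
    · have hcast : ((i : ℤ) + (j : ℤ) - 1) = ((i + j - 1 : ℕ) : ℤ) := by push_cast; omega
      rw [hcast, zpow_natCast]
      calc (RS.ncard : ℝ) ≤ (BadT.card : ℝ) := by exact_mod_cast hinj
        _ ≤ (((hh+2)*(i+j) + (i+1)*j : ℕ) : ℝ) * ((maxDeg G : ℝ))^(i+j-1) := by
            rw [← Nat.cast_pow, ← Nat.cast_mul]
            exact_mod_cast hBadTbound
        _ ≤ ((2 * (i + j) * hh * (2 * k + 1) + 2 * (i + 1) * j : ℕ) : ℝ) * (Kr * dr)^(i+j-1) := by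
            apply mul_le_mul
            · have hcoef : (hh+2)*(i+j) + (i+1)*j ≤
                  2 * (i + j) * hh * (2 * k + 1) + 2 * (i + 1) * j := by
                have e1 : hh + 2 ≤ 2*hh*(2*k+1) := by nlinarith [hh1, hk]
                have e3 : (hh+2)*(i+j) ≤ 2*(i+j)*hh*(2*k+1) := by
                  calc (hh+2)*(i+j) ≤ (2*hh*(2*k+1))*(i+j) := Nat.mul_le_mul_right _ e1
                    _ = 2*(i+j)*hh*(2*k+1) := by ring
                have e4 : (i+1)*j ≤ 2*(i+1)*j := by
                  calc (i+1)*j = 1*((i+1)*j) := by ring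
                    _ ≤ 2*((i+1)*j) := Nat.mul_le_mul_right _ (by omega)
                    _ = 2*(i+1)*j := by ring
                exact Nat.add_le_add e3 e4
              exact_mod_cast hcoef
            · exact pow_le_pow_left₀ (by positivity) hmax _
            · positivity
            · positivity
  have := lt_of_lt_of_le hcount hfinal
  exact absurd this (lt_irrefl _)
end PF
end C3
section C4
open Finset
open scoped Classical
namespace PF
variable {V : Type*} [Fintype V] [DecidableEq V] (G : SimpleGraph V)

lemma rich_path_avoid (k hh : ℕ) (Kr dr : ℝ)
    (hmax : (maxDeg G : ℝ) ≤ Kr * dr) (hh1 : 1 ≤ hh) (hk : 1 ≤ k)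
    {i j : ℕ} (hi : i < k) (hj : j < k) {x y : V}
    (hrich : Rich G k hh Kr dr i j x y)
    (B : Finset V) (hB : B.card ≤ hh) (hxB : x ∉ B) (hyB : y ∉ B) :
    ∃ w : ℕ → V, PathSeq G (2*k) w ∧ w 0 = x ∧ w (2*k) = y ∧
      ∀ s, 0 < s → s < 2*k → w s ∉ B := by
  classical
  have hxy : x ≠ y := hrich.1
  obtain ⟨⟨P, Q⟩, ⟨hP, hP0, hPpad, hQ, hQ0, hQpad, hMDP⟩, g1, g2, g3⟩ :=
    exists_good_pair G k hh Kr dr hmax hh1 hk hi hj hrich B hB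
  simp only at g1 g2 g3 hP hP0 hPpad hQ hQ0 hQpad hMDP
  set μ := 2*k - i - j with hμdef
  have hμ2 : 2 ≤ μ := by omega
  have hiμj : i + μ + j = 2*k := by omega
  obtain ⟨PP, hPP1, _, hPP3⟩ := hMDP
  -- the set of vertices a middle path must avoid internally
  set Bfin2 : Finset V := (B ∪ {x, y}) ∪ ((Icc 0 i).image P ∪ (Icc 0 j).image Q) with hBfin2
  have hBfin2card : Bfin2.card ≤ hh + 2 + (i+1) + (j+1) := by
    calc Bfin2.card ≤ (B ∪ {x,y}).card + ((Icc 0 i).image P ∪ (Icc 0 j).image Q).card :=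
        card_union_le _ _
      _ ≤ (B.card + ({x,y} : Finset V).card) + ((Icc 0 i).image P).card + ((Icc 0 j).image Q).card := by
          have h1 := card_union_le B ({x,y} : Finset V)
          have h2 := card_union_le ((Icc 0 i).image P) ((Icc 0 j).image Q)
          omega
      _ ≤ hh + 2 + (i+1) + (j+1) := by
          have h1 : ({x,y} : Finset V).card ≤ 2 := le_trans (card_insert_le _ _) (by simp)
          have h2 : ((Icc 0 i).image P).card ≤ i + 1 :=
            le_trans (card_image_le) (by rw [Nat.card_Icc]; omega)
          have h3 : ((Icc 0 j).image Q).card ≤ j + 1 :=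
            le_trans (card_image_le) (by rw [Nat.card_Icc]; omega)
          omega
  -- there is a middle path avoiding Bfin2 internally
  have hclean : ∃ a : Fin ((hh + 2) * (2 * k + 1) + 1), ∀ ρ, 0 < ρ → ρ < μ → PP a ρ ∉ Bfin2 := by
    by_contra hcl
    push_neg at hcl
    choose f hf1 hf2 hf3 using hcl
    have hginj : Function.Injective
        (fun a : Fin ((hh + 2) * (2 * k + 1) + 1) => (⟨PP a (f a), hf3 a⟩ : {v // v ∈ Bfin2})) := by
      intro a b hab
      by_contra hne
      have := hPP3 a b hne (f a) (f b) (hf1 a) (hf2 a) (hf1 b) (hf2 b)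
      simp only [Subtype.mk.injEq] at hab
      exact this hab
    have hcard := Fintype.card_le_of_injective _ hginj
    rw [Fintype.card_fin, Fintype.card_coe] at hcard
    have hfin : (hh + 2) * (2 * k + 1) + 1 ≤ hh + 2 + (i+1) + (j+1) :=
      le_trans hcard hBfin2card
    nlinarith [hk, hi, hj]
  obtain ⟨a, hclean⟩ := hclean
  set R := PP a with hRdef
  obtain ⟨hRpath, hR0, hRμ⟩ := hPP1 a
  rw [← hRdef] at hRpath hR0 hRμ
  -- facts
  have hPi_ne_Qj : ∀ s s', s ≤ i → s' ≤ j → P s ≠ Q s' := by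
    intro s s' hs hs'
    rcases Nat.eq_zero_or_pos s' with h0 | hpos
    · subst h0
      rw [hQ0]
      rcases Nat.eq_zero_or_pos s with h0' | hpos'
      · subst h0'; rw [hP0]; exact hxy
      · exact (g1 s hpos' hs).2.2
    · exact g3 s s' hs hpos hs'
  -- define the composite walk
  set w : ℕ → V := fun s => if s < i then P s else if s ≤ i + μ then R (s - i) else Q (2*k - s)
    with hwdef
  have wP : ∀ s, s ≤ i → w s = P s := by
    intro s hs
    rcases lt_or_eq_of_le hs with h | h
    · simp only [hwdef]; rw [if_pos h]
    · subst h
      simp only [hwdef]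
      rw [if_neg (by omega), if_pos (by omega)]
      simp only [Nat.sub_self]
      rw [hR0]
  have wR : ∀ s, i ≤ s → s ≤ i + μ → w s = R (s - i) := by
    intro s h1 h2
    simp only [hwdef]
    rw [if_neg (by omega), if_pos h2]
  have wQ : ∀ s, i + μ ≤ s → s ≤ 2*k → w s = Q (2*k - s) := by
    intro s h1 h2
    rcases lt_or_eq_of_le h1 with h | h
    · simp only [hwdef]
      rw [if_neg (by omega), if_neg (by omega)]
    · rw [← h]
      rw [wR _ (by omega) (by omega)]
      have e1 : i + μ - i = μ := by omega
      have e2 : 2*k - (i + μ) = j := by omega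
      rw [e1, e2, hRμ]
  refine ⟨w, ⟨?_, ?_⟩, ?_, ?_, ?_⟩
  · -- adjacency
    intro s hs
    rcases Nat.lt_or_ge (s+1) i with h | h
    · rw [wP s (by omega), wP (s+1) (by omega)]
      exact hP.1 s (by omega)
    · rcases Nat.lt_or_ge s i with h2 | h2
      · -- s + 1 = i
        have : s + 1 = i := by omega
        rw [wP s (by omega), wP (s+1) (by omega)]
        exact hP.1 s (by omega)
      · rcases Nat.lt_or_ge s (i + μ) with h3 | h3
        · rw [wR s h2 (by omega), wR (s+1) (by omega) (by omega)]
          have e1 : s + 1 - i = (s - i) + 1 := by omega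
          rw [e1]
          exact hRpath.1 (s - i) (by omega)
        · rw [wQ s h3 (by omega), wQ (s+1) (by omega) (by omega)]
          have h4 := hQ.1 (2*k - s - 1) (by omega)
          have e1 : 2*k - s - 1 + 1 = 2*k - s := by omega
          have e2 : 2*k - (s+1) = 2*k - s - 1 := by omega
          rw [e1] at h4
          rw [e2]
          exact h4.symm
  · -- injectivity
    intro s1 s2 hlt hle
    -- case analysis on zones
    rcases Nat.lt_or_ge s1 i with z1 | z1'
    · rcases Nat.lt_or_ge s2 i with z2 | z2'
      · rw [wP s1 (by omega), wP s2 (by omega)]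
        exact hP.2 s1 s2 hlt (by omega)
      · rcases le_or_gt s2 (i+μ) with z2 | z2
        · rw [wP s1 (by omega), wR s2 z2' z2]
          rcases Nat.eq_zero_or_pos (s2 - i) with hz | hz
          · rw [hz, hR0]
            exact hP.2 s1 i z1 (le_refl i)
          · rcases Nat.lt_or_ge (s2 - i) μ with hz2 | hz2
            · -- internal vertex of R
              intro hcon
              apply hclean (s2 - i) hz hz2
              rw [← hcon]
              rw [hBfin2]
              apply mem_union_right
              apply mem_union_left
              exact mem_image.mpr ⟨s1, by rw [mem_Icc]; omega, rfl⟩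
            · have : s2 - i = μ := by omega
              rw [this, hRμ]
              exact hPi_ne_Qj s1 j (by omega) (le_refl j)
        · rw [wP s1 (by omega), wQ s2 (by omega) hle]
          exact hPi_ne_Qj s1 (2*k - s2) (by omega) (by omega)
    · rcases le_or_gt s1 (i+μ) with z1 | z1
      · rcases le_or_gt s2 (i+μ) with z2 | z2
        · rw [wR s1 z1' z1, wR s2 (by omega) z2]
          exact hRpath.2 (s1 - i) (s2 - i) (by omega) (by omega)
        · -- s1 in R zone, s2 in Q zone
          rw [wR s1 z1' z1, wQ s2 (by omega) hle]
          rcases Nat.eq_zero_or_pos (s1 - i) with hz | hz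
          · rw [hz, hR0]
            exact hPi_ne_Qj i (2*k - s2) (le_refl i) (by omega)
          · rcases Nat.lt_or_ge (s1 - i) μ with hz2 | hz2
            · intro hcon
              apply hclean (s1 - i) hz hz2
              rw [hcon, hBfin2]
              apply mem_union_right
              apply mem_union_right
              exact mem_image.mpr ⟨2*k - s2, by rw [mem_Icc]; omega, rfl⟩
            · have : s1 - i = μ := by omega
              rw [this, hRμ]
              intro hcon
              have := hQ.2 (2*k - s2) j (by omega) (le_refl j)
              exact this hcon.symm
      · -- both in Q zone
        rw [wQ s1 (by omega) (by omega), wQ s2 (by omega) hle]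
        intro hcon
        have := hQ.2 (2*k - s2) (2*k - s1) (by omega) (by omega)
        exact this hcon.symm
  · rw [wP 0 (by omega)]; exact hP0
  · rw [wQ (2*k) (by omega) (le_refl _)]
    simp only [Nat.sub_self]
    exact hQ0
  · -- internal vertices avoid B
    intro s hs1 hs2
    rcases Nat.lt_or_ge s i with z | z
    · rw [wP s (by omega)]
      exact (g1 s (by omega) (by omega)).1
    · rcases le_or_gt s (i+μ) with z2 | z2
      · rw [wR s z z2]
        rcases Nat.eq_zero_or_pos (s - i) with hz | hz
        · rw [hz, hR0]
          rcases Nat.eq_zero_or_pos i with hi0 | hi0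
          · rw [hi0, hP0]; exact hxB
          · exact (g1 i hi0 (le_refl i)).1
        · rcases Nat.lt_or_ge (s - i) μ with hz2 | hz2
          · intro hcon
            apply hclean (s - i) hz hz2
            rw [hBfin2]
            apply mem_union_left
            exact mem_union_left _ hcon
          · have : s - i = μ := by omega
            rw [this, hRμ]
            rcases Nat.eq_zero_or_pos j with hj0 | hj0
            · rw [hj0, hQ0]; exact hyB
            · exact (g2 j hj0 (le_refl j)).1
      · rw [wQ s (by omega) (by omega)]
        exact (g2 (2*k - s) (by omega) (by omega)).1
end PF
end C4
section C5
open Finset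
open scoped Classical
namespace PF
variable {V : Type*} [Fintype V] [DecidableEq V] (G : SimpleGraph V)

lemma rich_path_avoid' (k hh : ℕ) (Kr dr : ℝ)
    (hmax : (maxDeg G : ℝ) ≤ Kr * dr) (hh1 : 1 ≤ hh) (hk : 1 ≤ k) {x y : V}
    (h : ∃ i j, i < k ∧ j < k ∧ (Rich G k hh Kr dr i j x y ∨ Rich G k hh Kr dr i j y x))
    (B : Finset V) (hB : B.card ≤ hh) (hxB : x ∉ B) (hyB : y ∉ B) :
    ∃ w : ℕ → V, PathSeq G (2*k) w ∧ w 0 = x ∧ w (2*k) = y ∧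
      ∀ s, 0 < s → s < 2*k → w s ∉ B := by
  obtain ⟨i, j, hi, hj, hcase⟩ := h
  rcases hcase with hr | hr
  · exact rich_path_avoid G k hh Kr dr hmax hh1 hk hi hj hr B hB hxB hyB
  · obtain ⟨w', ⟨hadj, hinj⟩, h0, h2k, hint⟩ :=
      rich_path_avoid G k hh Kr dr hmax hh1 hk hi hj hr B hB hyB hxB
    refine ⟨fun s => w' (2*k - s), ⟨?_, ?_⟩, ?_, ?_, ?_⟩
    · intro s hs
      dsimp only
      have ha := hadj (2*k - s - 1) (by omega)
      have e1 : 2*k - s - 1 + 1 = 2*k - s := by omega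
      have e2 : 2*k - (s+1) = 2*k - s - 1 := by omega
      rw [e1] at ha
      rw [e2]
      exact ha.symm
    · intro s1 s2 hlt hle
      dsimp only
      intro hcon
      exact hinj (2*k - s2) (2*k - s1) (by omega) (by omega) hcon.symm
    · dsimp only; rw [Nat.sub_zero]; exact h2k
    · dsimp only; rw [Nat.sub_self]; exact h0
    · intro s hs1 hs2
      dsimp only
      exact hint (2*k - s) (by omega) (by omega)

variable (t : ℕ) (m : Fin t → Fin t → ℕ)

noncomputable def M0 : ℕ := (univ : Finset (Fin t × Fin t)).sup (fun p => m p.1 p.2) + 1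

noncomputable def TriplesF : Finset (Fin t × Fin t × ℕ) :=
  ((univ : Finset (Fin t)) ×ˢ (univ : Finset (Fin t)) ×ˢ range (M0 t m)).filter
    (fun τ => τ.1 < τ.2.1 ∧ τ.2.2 < m τ.1 τ.2.1)

lemma mem_TriplesF {a b : Fin t} {c : ℕ} (hab : a < b) (hc : c < m a b) :
    (a, b, c) ∈ TriplesF t m := by
  rw [TriplesF, mem_filter]
  refine ⟨?_, hab, hc⟩
  rw [mem_product, mem_product]
  refine ⟨mem_univ _, mem_univ _, ?_⟩
  dsimp only
  rw [mem_range]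
  unfold M0
  have : m a b ≤ (univ : Finset (Fin t × Fin t)).sup (fun p => m p.1 p.2) :=
    le_sup (f := fun p : Fin t × Fin t => m p.1 p.2) (mem_univ (a, b))
  omega

lemma card_TriplesF_le :
    (TriplesF t m).card ≤ ∑ p : Fin t × Fin t, if p.1 < p.2 then m p.1 p.2 else 0 := by
  rw [card_eq_sum_card_fiberwise (f := fun τ => (τ.1, τ.2.1))
    (t := (univ : Finset (Fin t × Fin t))) (fun τ _ => mem_univ _)]
  apply sum_le_sum
  intro p _
  by_cases hp : p.1 < p.2
  · rw [if_pos hp]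
    have : ((TriplesF t m).filter (fun τ => (τ.1, τ.2.1) = p)).card ≤ (range (m p.1 p.2)).card := by
      apply card_le_card_of_injOn (fun τ => τ.2.2)
      · intro τ hτ
        simp only [mem_coe, mem_filter, TriplesF] at hτ
        obtain ⟨⟨_, h1, h2⟩, h3⟩ := hτ
        rw [mem_coe, mem_range]
        have e1 : τ.1 = p.1 := by rw [← h3]
        have e2 : τ.2.1 = p.2 := by rw [← h3]
        rw [← e1, ← e2]
        exact h2
      · intro τ hτ τ' hτ' heq
        simp only [coe_filter, Set.mem_setOf_eq] at hτ hτ'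
        have e1 : τ.1 = p.1 := by rw [← hτ.2]
        have e2 : τ.2.1 = p.2 := by rw [← hτ.2]
        have e1' : τ'.1 = p.1 := by rw [← hτ'.2]
        have e2' : τ'.2.1 = p.2 := by rw [← hτ'.2]
        have : τ.2 = τ'.2 := Prod.ext (e2.trans e2'.symm) heq
        exact Prod.ext (e1.trans e1'.symm) this
    rwa [card_range] at this
  · rw [if_neg hp, Nat.le_zero, card_eq_zero, filter_eq_empty_iff]
    intro τ hτ
    simp only [TriplesF, mem_filter] at hτ
    intro hcon
    apply hp
    have e1 : τ.1 = p.1 := by rw [← hcon]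
    have e2 : τ.2.1 = p.2 := by rw [← hcon]
    rw [← e1, ← e2]
    exact hτ.2.1

lemma exists_subdiv (k hh : ℕ) (Kr dr : ℝ)
    (hmax : (maxDeg G : ℝ) ≤ Kr * dr) (hh1 : 1 ≤ hh) (hk : 1 ≤ k) (ht : 1 ≤ t)
    (hhge : t + (2*k - 1) * (∑ p : Fin t × Fin t, if p.1 < p.2 then m p.1 p.2 else 0) ≤ hh)
    (x : Fin t → V)
    (hx : ∀ a b, a ≠ b → ∃ i j, i < k ∧ j < k ∧
      (Rich G k hh Kr dr i j (x a) (x b) ∨ Rich G k hh Kr dr i j (x b) (x a))) :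
    ContainsMultiSubdiv G t m (2*k) := by
  classical
  have hxinj : Function.Injective x := by
    intro a b hab
    by_contra hne
    obtain ⟨i, j, _, _, hr | hr⟩ := hx a b hne
    · exact hr.1 hab
    · exact hr.1 hab.symm
  have main : ∀ J : Finset (Fin t × Fin t × ℕ), J ⊆ TriplesF t m →
      ∃ π : Fin t × Fin t × ℕ → (ℕ → V),
        (∀ τ ∈ J, PathSeq G (2*k) (π τ) ∧ π τ 0 = x τ.1 ∧ π τ (2*k) = x τ.2.1 ∧
          ∀ s, 0 < s → s < 2*k → ∀ d, π τ s ≠ x d) ∧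
        (∀ τ ∈ J, ∀ τ' ∈ J, τ ≠ τ' → ∀ s s', 0 < s → s < 2*k → 0 < s' → s' < 2*k →
          π τ s ≠ π τ' s') := by
    intro J
    induction J using Finset.induction_on with
    | empty =>
      intro _
      exact ⟨fun _ _ => x ⟨0, ht⟩, fun τ hτ => absurd hτ (notMem_empty τ),
        fun τ hτ => absurd hτ (notMem_empty τ)⟩
    | @insert τ₀ J hτ₀J ih =>
      intro hsub
      obtain ⟨π, hπ1, hπ2⟩ := ih (fun τ hτ => hsub (mem_insert_of_mem hτ))
      have hτ₀T := hsub (mem_insert_self τ₀ J)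
      rw [TriplesF, mem_filter] at hτ₀T
      obtain ⟨_, hab, hc⟩ := hτ₀T
      set B : Finset V :=
        ((univ.image x) ∪ J.biUnion (fun τ => (Ioo 0 (2*k)).image (π τ))) \ {x τ₀.1, x τ₀.2.1}
        with hBdef
      have hBcard : B.card ≤ hh := by
        calc B.card ≤ ((univ.image x) ∪ J.biUnion (fun τ => (Ioo 0 (2*k)).image (π τ))).card :=
            card_le_card (sdiff_subset)
          _ ≤ (univ.image x).card + (J.biUnion (fun τ => (Ioo 0 (2*k)).image (π τ))).card :=
            card_union_le _ _
          _ ≤ t + (2*k - 1) * (∑ p : Fin t × Fin t, if p.1 < p.2 then m p.1 p.2 else 0) := by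
            have h1 : (univ.image x).card ≤ t := le_trans card_image_le (by simp)
            have h2 : (J.biUnion (fun τ => (Ioo 0 (2*k)).image (π τ))).card ≤
                J.card * (2*k - 1) := by
              calc _ ≤ ∑ τ ∈ J, ((Ioo 0 (2*k)).image (π τ)).card := card_biUnion_le
                _ ≤ J.card • (2*k - 1) := by
                    apply sum_le_card_nsmul
                    intro τ _
                    exact le_trans card_image_le (by rw [Nat.card_Ioo]; omega)
                _ = J.card * (2*k - 1) := by rw [smul_eq_mul]
            have h3 : J.card ≤ ∑ p : Fin t × Fin t, if p.1 < p.2 then m p.1 p.2 else 0 :=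
              le_trans (card_le_card (fun τ hτ => hsub (mem_insert_of_mem hτ)))
                (card_TriplesF_le t m)
            have h4 : J.card * (2*k-1) ≤
                (2*k - 1) * (∑ p : Fin t × Fin t, if p.1 < p.2 then m p.1 p.2 else 0) := by
              rw [Nat.mul_comm]
              exact Nat.mul_le_mul_left _ h3
            omega
          _ ≤ hh := hhge
      have hxaB : x τ₀.1 ∉ B := by
        rw [hBdef, mem_sdiff]
        intro hcon
        exact hcon.2 (by simp)
      have hxbB : x τ₀.2.1 ∉ B := by
        rw [hBdef, mem_sdiff]
        intro hcon
        exact hcon.2 (by simp)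
      obtain ⟨w, hw, hw0, hw2k, hwB⟩ := rich_path_avoid' G k hh Kr dr hmax hh1 hk
        (hx τ₀.1 τ₀.2.1 (ne_of_lt hab)) B hBcard hxaB hxbB
      refine ⟨Function.update π τ₀ w, ?_, ?_⟩
      · intro τ hτ
        rcases mem_insert.mp hτ with heq | hτJ
        · rw [heq, Function.update_self]
          refine ⟨hw, hw0, hw2k, ?_⟩
          intro s hs1 hs2 d
          rcases eq_or_ne (x d) (x τ₀.1) with he | he
          · rw [he, ← hw0]
            exact fun hcon => (hw.2 0 s hs1 (by omega)) hcon.symm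
          · rcases eq_or_ne (x d) (x τ₀.2.1) with he2 | he2
            · rw [he2, ← hw2k]
              exact hw.2 s (2*k) hs2 (le_refl _)
            · intro hcon
              apply hwB s hs1 hs2
              rw [hcon, hBdef, mem_sdiff]
              constructor
              · exact mem_union_left _ (mem_image.mpr ⟨d, mem_univ d, rfl⟩)
              · simp only [mem_insert, mem_singleton]
                push_neg
                exact ⟨he, he2⟩
        · rw [Function.update_of_ne (by rintro rfl; exact hτ₀J hτJ)]
          exact hπ1 τ hτJ
      · intro τ hτ τ' hτ' hne s s' hs1 hs2 hs1' hs2'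
        have hππ' : ∀ τ'' ∈ J, ∀ s'', 0 < s'' → s'' < 2*k → π τ'' s'' ∈ B := by
          intro τ'' hτ'' s'' h1 h2
          rw [hBdef, mem_sdiff]
          constructor
          · apply mem_union_right
            rw [mem_biUnion]
            exact ⟨τ'', hτ'', mem_image.mpr ⟨s'', by rw [mem_Ioo]; omega, rfl⟩⟩
          · simp only [mem_insert, mem_singleton]
            push_neg
            exact ⟨(hπ1 τ'' hτ'').2.2.2 s'' h1 h2 τ₀.1, (hπ1 τ'' hτ'').2.2.2 s'' h1 h2 τ₀.2.1⟩
        rcases mem_insert.mp hτ with heq | hτJ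
        · rcases mem_insert.mp hτ' with heq' | hτ'J
          · exact absurd (heq.trans heq'.symm) hne
          · rw [heq, Function.update_self,
              Function.update_of_ne (by rintro rfl; exact hτ₀J hτ'J)]
            intro hcon
            apply hwB s hs1 hs2
            rw [hcon]
            exact hππ' τ' hτ'J s' hs1' hs2'
        · rw [Function.update_of_ne (by rintro rfl; exact hτ₀J hτJ)]
          rcases mem_insert.mp hτ' with heq' | hτ'J
          · rw [heq', Function.update_self]
            intro hcon
            apply hwB s' hs1' hs2'
            rw [← hcon]
            exact hππ' τ hτJ s hs1 hs2
          · rw [Function.update_of_ne (by rintro rfl; exact hτ₀J hτ'J)]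
            exact hπ2 τ hτJ τ' hτ'J hne s s' hs1 hs2 hs1' hs2'
  obtain ⟨π, hπ1, hπ2⟩ := main (TriplesF t m) (subset_refl _)
  refine ⟨x, fun a b c => π (a, b, (c:ℕ)), hxinj, ?_, ?_, ?_⟩
  · intro a b hab c
    have hmem := mem_TriplesF t m hab c.isLt
    exact ⟨(hπ1 _ hmem).1, (hπ1 _ hmem).2.1, (hπ1 _ hmem).2.2.1⟩
  · intro a b hab c i hi1 hi2 d
    have hmem := mem_TriplesF t m hab c.isLt
    exact (hπ1 _ hmem).2.2.2 i hi1 hi2 d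
  · intro a b hab a' b' hab' c c' hne i i' hi1 hi2 hi1' hi2'
    have hmem := mem_TriplesF t m hab c.isLt
    have hmem' := mem_TriplesF t m hab' c'.isLt
    exact hπ2 _ hmem _ hmem' hne i i' hi1 hi2 hi1' hi2'
end PF
end C5
section C6
open Finset
open scoped Classical
namespace PF
variable {T : Type*} [Fintype T] [DecidableEq T]

noncomputable def adjP (A : SimpleGraph T) (F : Finset T) : ℕ :=
  ∑ u ∈ F, (F.filter (fun w => A.Adj u w)).card

lemma turan_weak (A : SimpleGraph T) (s : ℕ) (hs : 1 ≤ s) :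
    ∀ F : Finset T, (∀ C : Finset T, C ⊆ F → ¬ A.IsNClique (s+1) C) →
    (adjP A F : ℝ) ≤ (1 - 1/s) * (F.card)^2 := by
  induction s, hs using Nat.le_induction with
  | base =>
    intro F hfree
    have : adjP A F = 0 := by
      rw [adjP]
      apply sum_eq_zero
      intro u hu
      rw [card_eq_zero, filter_eq_empty_iff]
      intro w hw hadj
      apply hfree {u, w} (insert_subset hu (by simp [hw]))
      constructor
      · intro p hp q hq hpq
        simp only [coe_insert, Set.mem_insert_iff, coe_singleton, Set.mem_singleton_iff] at hp hq
        rcases hp with rfl | rfl <;> rcases hq with rfl | rfl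
        · exact absurd rfl hpq
        · exact hadj
        · exact hadj.symm
        · exact absurd rfl hpq
      · rw [card_insert_of_notMem (by simp [hadj.ne]), card_singleton]
    rw [this]
    simp
  | succ s hs1 ih =>
    intro F hfree
    rcases Finset.eq_empty_or_nonempty F with rfl | hFne
    · simp [adjP]
    obtain ⟨v, hv, hmaxd⟩ := exists_max_image F (fun u => (F.filter (fun w => A.Adj u w)).card) hFne
    set N := F.filter (fun w => A.Adj v w) with hN
    set d := N.card with hd
    set M := F.card with hM
    have hNsub : N ⊆ F := filter_subset _ _
    have hdM : d ≤ M := card_le_card hNsub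
    have hNfree : ∀ C : Finset T, C ⊆ N → ¬ A.IsNClique (s+1) C := by
      intro C hC hclique
      have hvC : v ∉ C := by
        intro hvC
        have := hC hvC
        rw [hN, mem_filter] at this
        exact A.irrefl this.2
      apply hfree (insert v C) (insert_subset hv (hC.trans hNsub))
      constructor
      · intro p hp q hq hpq
        simp only [coe_insert, Set.mem_insert_iff, mem_coe] at hp hq
        rcases hp with rfl | hp <;> rcases hq with rfl | hq
        · exact absurd rfl hpq
        · have := hC hq; rw [hN, mem_filter] at this; exact this.2
        · have := hC hp; rw [hN, mem_filter] at this; exact (this.2).symm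
        · exact hclique.1 hp hq hpq
      · rw [card_insert_of_notMem hvC, hclique.2]
    have hIH := ih N hNfree
    -- counting
    have hsplit : ∀ u : T, (F.filter (fun w => A.Adj u w)).card =
        (N.filter (fun w => A.Adj u w)).card + ((F \ N).filter (fun w => A.Adj u w)).card := by
      intro u
      have hFeq : F = N ∪ (F \ N) := (union_sdiff_of_subset hNsub).symm
      conv_lhs => rw [hFeq]
      rw [filter_union]
      apply card_union_of_disjoint
      exact disjoint_filter_filter disjoint_sdiff
    have hFsum : adjP A F = (∑ u ∈ N, (F.filter (fun w => A.Adj u w)).card)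
        + (∑ u ∈ F \ N, (F.filter (fun w => A.Adj u w)).card) := by
      rw [adjP, ← sum_sdiff hNsub]
      ring
    have hb1 : (∑ u ∈ F \ N, (F.filter (fun w => A.Adj u w)).card) ≤ (M - d) * d := by
      calc _ ≤ (F \ N).card • d := by
            apply sum_le_card_nsmul
            intro u hu
            exact hmaxd u (mem_sdiff.mp hu).1
        _ = (M - d) * d := by rw [smul_eq_mul, card_sdiff_of_subset hNsub]
    have hb2 : (∑ u ∈ N, (F.filter (fun w => A.Adj u w)).card) ≤ adjP A N + d * (M - d) := by
      calc (∑ u ∈ N, (F.filter (fun w => A.Adj u w)).card)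
          = (∑ u ∈ N, (N.filter (fun w => A.Adj u w)).card)
            + (∑ u ∈ N, ((F \ N).filter (fun w => A.Adj u w)).card) := by
            rw [← sum_add_distrib]
            apply sum_congr rfl
            intro u _
            exact hsplit u
        _ ≤ adjP A N + d * (M - d) := by
            apply Nat.add_le_add (le_refl _)
            calc _ ≤ N.card • (M - d) := by
                  apply sum_le_card_nsmul
                  intro u _
                  exact le_trans (card_filter_le _ _) (le_of_eq (card_sdiff_of_subset hNsub))
              _ = d * (M - d) := by rw [smul_eq_mul]
    have htot : (adjP A F : ℝ) ≤ (adjP A N : ℝ) + 2 * d * ((M : ℝ) - d) := by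
      have h1 : adjP A F ≤ adjP A N + d * (M - d) + (M - d) * d := by omega
      have h2 : ((d * (M - d) : ℕ) : ℝ) = (d : ℝ) * ((M:ℝ) - (d:ℝ)) := by
        push_cast [Nat.cast_sub hdM]
        ring
      calc (adjP A F : ℝ) ≤ ((adjP A N + d * (M - d) + (M - d) * d : ℕ) : ℝ) := by
            exact_mod_cast h1
        _ = (adjP A N : ℝ) + 2 * d * ((M : ℝ) - d) := by
            push_cast [Nat.cast_sub hdM]
            ring
    have hdN : ((N.card : ℝ))^2 = ((d : ℝ))^2 := by rw [hd]
    have hs0 : (0:ℝ) < (s : ℝ) := by exact_mod_cast hs1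
    have hs10 : (0:ℝ) < (s : ℝ) + 1 := by linarith
    have hdMr : (d : ℝ) ≤ (M : ℝ) := by exact_mod_cast hdM
    have hd0 : (0:ℝ) ≤ (d : ℝ) := Nat.cast_nonneg d
    have key : (1 - 1/(s:ℝ)) * (d:ℝ)^2 + 2 * d * ((M:ℝ) - d) ≤ (1 - 1/((s:ℝ)+1)) * (M:ℝ)^2 := by
      rw [one_sub_div (ne_of_gt hs0), one_sub_div (ne_of_gt hs10)]
      rw [div_mul_eq_mul_div, div_mul_eq_mul_div]
      rw [div_add' _ _ _ (ne_of_gt hs0)]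
      rw [div_le_div_iff₀ hs0 hs10]
      nlinarith [sq_nonneg (((s:ℝ)+1) * ((M:ℝ) - (d:ℝ)) - (M:ℝ)), hs0, hs10,
        mul_pos hs0 hs10, sq_nonneg ((M:ℝ) - (d:ℝ)), sq_nonneg ((s:ℝ)*((M:ℝ)-(d:ℝ)) - (d:ℝ))]
    have hcast : (s:ℝ) + 1 = ((s+1 : ℕ) : ℝ) := by push_cast; ring
    calc (adjP A F : ℝ) ≤ (adjP A N : ℝ) + 2 * d * ((M : ℝ) - d) := htot
      _ ≤ (1 - 1/s) * (d:ℝ)^2 + 2 * d * ((M:ℝ) - d) := by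
          apply add_le_add_left
          calc (adjP A N : ℝ) ≤ (1 - 1/s) * (N.card : ℝ)^2 := by
                have := hIH
                push_cast at this ⊢
                exact this
            _ = (1 - 1/s) * (d:ℝ)^2 := by rw [hdN]
      _ ≤ (1 - 1/((s:ℝ)+1)) * (M:ℝ)^2 := key
      _ = (1 - 1/((s+1:ℕ):ℝ)) * ((F.card : ℕ):ℝ)^2 := by rw [← hcast, hM]
end PF
end C6
section C7
open Finset
open scoped Classical
namespace PF
variable {V : Type*} [Fintype V] [DecidableEq V]

noncomputable def AuxG (G : SimpleGraph V) (k hh : ℕ) (Kr dr : ℝ) :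
    SimpleGraph (Fin (k+1) → V) where
  Adj u u' := u ≠ u' ∧ ∃ ℓ i j : ℕ, 1 ≤ ℓ ∧ ℓ ≤ k ∧ i < k ∧ j < k ∧
    (Rich G k hh Kr dr i j (tup u ℓ) (tup u' ℓ) ∨ Rich G k hh Kr dr i j (tup u' ℓ) (tup u ℓ))
  symm := ⟨by
    rintro u u' ⟨h1, ℓ, i, j, h2, h3, h4, h5, h6⟩
    exact ⟨h1.symm, ℓ, i, j, h2, h3, h4, h5, h6.symm⟩⟩
  loopless := ⟨by rintro u ⟨h1, _⟩; exact h1 rfl⟩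

lemma auxG_cliqueFree (G : SimpleGraph V) (t : ℕ) (m : Fin t → Fin t → ℕ)
    (k hh : ℕ) (Kr dr : ℝ)
    (hmax : (maxDeg G : ℝ) ≤ Kr * dr) (hh1 : 1 ≤ hh) (hk : 1 ≤ k) (ht : 1 ≤ t)
    (hhge : t + (2*k - 1) * (∑ p : Fin t × Fin t, if p.1 < p.2 then m p.1 p.2 else 0) ≤ hh)
    (r : ℕ) (hram : RamseyProp k t r)
    (hfree : ¬ ContainsMultiSubdiv G t m (2*k)) :
    (AuxG G k hh Kr dr).CliqueFree r := by
  intro F hF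
  set e : Fin r → (Fin (k+1) → V) :=
    fun a => ((F.equivFin.symm (Fin.cast hF.2.symm a)) : {x // x ∈ F}) with he
  have hemem : ∀ a, e a ∈ F := fun a => (F.equivFin.symm (Fin.cast hF.2.symm a)).2
  have heinj : ∀ a b : Fin r, a ≠ b → e a ≠ e b := by
    intro a b hne hcon
    apply hne
    have h2 := F.equivFin.symm.injective (Subtype.ext hcon)
    have h3 := congrArg Fin.val h2
    simp only [Fin.coe_cast] at h3
    exact Fin.ext h3
  have hadj : ∀ a b : Fin r, a ≠ b → (AuxG G k hh Kr dr).Adj (e a) (e b) := by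
    intro a b hne
    exact hF.1 (mem_coe.mpr (hemem a)) (mem_coe.mpr (hemem b)) (heinj a b hne)
  set SS : Fin r → Fin r → Finset ℕ := fun a b => (Icc 1 k).filter (fun ℓ =>
    ∃ i j, i < k ∧ j < k ∧ (Rich G k hh Kr dr i j (tup (e a) ℓ) (tup (e b) ℓ) ∨
      Rich G k hh Kr dr i j (tup (e b) ℓ) (tup (e a) ℓ))) with hSS
  have hSSsymm : ∀ a b, SS a b = SS b a := by
    intro a b
    apply filter_congr
    intro ℓ _
    constructor
    · rintro ⟨i, j, h1, h2, h3⟩; exact ⟨i, j, h1, h2, h3.symm⟩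
    · rintro ⟨i, j, h1, h2, h3⟩; exact ⟨i, j, h1, h2, h3.symm⟩
  have hSSne : ∀ a b : Fin r, a ≠ b → (SS a b).Nonempty := by
    intro a b hne
    obtain ⟨_, ℓ, i, j, h2, h3, h4, h5, h6⟩ := hadj a b hne
    exact ⟨ℓ, by rw [hSS, mem_filter, mem_Icc]; exact ⟨⟨h2, h3⟩, i, j, h4, h5, h6⟩⟩
  set f : Fin r → Fin r → ℕ := fun a b => sInf {n : ℕ | n ∈ SS a b} with hf
  have hfsymm : ∀ a b, f a b = f b a := by
    intro a b
    show sInf {n : ℕ | n ∈ SS a b} = sInf {n : ℕ | n ∈ SS b a}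
    rw [hSSsymm a b]
  have hfmem : ∀ a b : Fin r, a ≠ b → f a b ∈ SS a b := by
    intro a b hne
    obtain ⟨w, hw⟩ := hSSne a b hne
    have : sInf {n : ℕ | n ∈ SS a b} ∈ {n : ℕ | n ∈ SS a b} := Nat.sInf_mem ⟨w, hw⟩
    exact this
  have hfbound : ∀ a b, f a b - 1 < k := by
    intro a b
    by_cases hne : a = b
    · subst hne
      by_cases hss : (SS a a).Nonempty
      · obtain ⟨w, hw⟩ := hss
        have hmem : sInf {n : ℕ | n ∈ SS a a} ∈ {n : ℕ | n ∈ SS a a} := Nat.sInf_mem ⟨w, hw⟩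
        have : f a a ∈ SS a a := hmem
        rw [hSS] at this
        simp only [mem_filter, mem_Icc] at this
        omega
      · have hempty : {n : ℕ | n ∈ SS a a} = ∅ := by
          ext n
          simp only [Set.mem_setOf_eq, Set.mem_empty_iff_false, iff_false]
          intro hn
          exact hss ⟨n, hn⟩
        have : f a a = 0 := by
          show sInf {n : ℕ | n ∈ SS a a} = 0
          rw [hempty, Nat.sInf_empty]
        omega
    · have := hfmem a b hne
      rw [hSS] at this
      simp only [mem_filter, mem_Icc] at this
      omega
  set χ : Fin r → Fin r → Fin k := fun a b => ⟨f a b - 1, hfbound a b⟩ with hχ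
  have hχsymm : ∀ a b, χ a b = χ b a := by
    intro a b
    apply Fin.ext
    show f a b - 1 = f b a - 1
    rw [hfsymm a b]
  obtain ⟨col, sF, hcard, hmono⟩ := hram χ hχsymm
  set es : Fin t → {x // x ∈ sF} := fun d => sF.equivFin.symm (Fin.cast hcard.symm d) with hes
  set xfun : Fin t → V := fun d => tup (e ((es d) : Fin r)) ((col:ℕ) + 1) with hxfun
  have hrichpair : ∀ d d' : Fin t, d ≠ d' → ∃ i j, i < k ∧ j < k ∧
      (Rich G k hh Kr dr i j (xfun d) (xfun d') ∨ Rich G k hh Kr dr i j (xfun d') (xfun d)) := by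
    intro d d' hne
    set a : Fin r := ((es d) : Fin r) with ha
    set b : Fin r := ((es d') : Fin r) with hb
    have hab : a ≠ b := by
      intro hcon
      apply hne
      have h2 := sF.equivFin.symm.injective (Subtype.ext hcon)
      have h3 := congrArg Fin.val h2
      simp only [Fin.coe_cast] at h3
      exact Fin.ext h3
    have hχab : χ a b = col := hmono a (es d).2 b (es d').2 hab
    have hmem := hfmem a b hab
    rw [hSS] at hmem
    simp only [mem_filter, mem_Icc] at hmem
    have hval : (χ a b : ℕ) = f a b - 1 := rfl
    rw [hχab] at hval
    have hmm : f a b = (col : ℕ) + 1 := by omega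
    rw [hmm] at hmem
    exact hmem.2
  apply hfree
  exact exists_subdiv G t m k hh Kr dr hmax hh1 hk ht hhge xfun hrichpair

lemma adjPairs_eq {T : Type*} [Fintype T] [DecidableEq T] (A : SimpleGraph T) (F : Finset T) :
    ((F ×ˢ F).filter (fun p => A.Adj p.1 p.2)).card = adjP A F := by
  rw [adjP, card_eq_sum_card_fiberwise (f := Prod.fst) (t := F)
    (fun p hp => (mem_product.mp (mem_filter.mp hp).1).1)]
  apply sum_congr rfl
  intro u hu
  apply card_bij' (i := fun p _ => p.2) (j := fun w _ => (u, w))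
  · intro p hp
    simp only [mem_filter, mem_product] at hp ⊢
    refine ⟨hp.1.1.2, ?_⟩
    rw [← hp.2]
    exact hp.1.2
  · intro p hp
    rw [mem_filter] at hp
    have h2 : p.1 = u := hp.2
    exact Prod.ext h2.symm rfl
  · intro w _
    rfl
  · intro w hw
    rw [mem_filter] at hw
    rw [mem_filter, mem_filter, mem_product]
    exact ⟨⟨⟨hu, hw.1⟩, hw.2⟩, rfl⟩

lemma nonadj_card {T : Type*} [Fintype T] [DecidableEq T] (A : SimpleGraph T) (r : ℕ)
    (hr : 2 ≤ r) (hfree : A.CliqueFree r) (F : Finset T) :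
    ((F.card : ℝ))^2 / ((r : ℝ) - 1) ≤
      (((F ×ˢ F).filter (fun p => ¬ A.Adj p.1 p.2)).card : ℝ) := by
  set s := r - 1 with hs
  have hs1 : 1 ≤ s := by omega
  have hsr : s + 1 = r := by omega
  have hturan := turan_weak A s hs1 F (fun C hC hclq => hfree C (by rwa [hsr] at hclq))
  have hsum : ((F ×ˢ F).filter (fun p => A.Adj p.1 p.2)).card +
      ((F ×ˢ F).filter (fun p => ¬ A.Adj p.1 p.2)).card = F.card^2 := by
    rw [card_filter_add_card_filter_not, card_product]
    ring
  rw [adjPairs_eq] at hsum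
  have hs0 : (0:ℝ) < (s:ℝ) := by exact_mod_cast hs1
  have hcast : ((r:ℝ) - 1) = (s:ℝ) := by
    rw [hs]
    push_cast [Nat.cast_sub (by omega : 1 ≤ r)]
    ring
  rw [hcast]
  rw [div_le_iff₀ hs0]
  have h1 : ((adjP A F : ℝ)) + (((F ×ˢ F).filter (fun p => ¬ A.Adj p.1 p.2)).card : ℝ)
      = ((F.card:ℝ))^2 := by exact_mod_cast congrArg (Nat.cast : ℕ → ℝ) hsum
  have h2 : (1 - 1/(s:ℝ)) * ((F.card:ℝ))^2 * (s:ℝ) = ((F.card:ℝ))^2 * s - ((F.card:ℝ))^2 := by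
    field_simp
  have h3 := mul_le_mul_of_nonneg_right hturan (le_of_lt hs0)
  rw [h2] at h3
  have h4 := congrArg (fun z : ℝ => z * (s:ℝ)) h1
  nlinarith [h3, h4]
end PF
end C7
section C8
open Finset
open scoped Classical
namespace PF
variable {V : Type*} [Fintype V] [DecidableEq V]

noncomputable def WES (G : SimpleGraph V) (k : ℕ) (S : Finset V) (v : V) :
    Finset (Fin (k+1) → V) :=
  univ.filter (fun q => TWalk G k q ∧ tup q 0 = v ∧ tup q k ∈ S)

noncomputable def glT {k : ℕ} (uu : (Fin (k+1) → V) × (Fin (k+1) → V)) : Fin (2*k+1) → V :=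
  fun a => if (a:ℕ) ≤ k then tup uu.1 (k - (a:ℕ)) else tup uu.2 ((a:ℕ) - k)

lemma tup_glT_le {k : ℕ} (uu : (Fin (k+1) → V) × (Fin (k+1) → V)) {s : ℕ} (hs : s ≤ k) :
    tup (glT uu) s = tup uu.1 (k - s) := by
  rw [tup_eq _ (by omega : s ≤ 2*k)]
  show (if (s ≤ k) then _ else _) = _
  rw [if_pos hs]

lemma tup_glT_gt {k : ℕ} (uu : (Fin (k+1) → V) × (Fin (k+1) → V)) {s : ℕ}
    (hs1 : k < s) (hs2 : s ≤ 2*k) :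
    tup (glT uu) s = tup uu.2 (s - k) := by
  rw [tup_eq _ (by omega : s ≤ 2*k)]
  show (if (s ≤ k) then _ else _) = _
  rw [if_neg (by omega)]

lemma main_count (G : SimpleGraph V) (k hh : ℕ) (Kr dr : ℝ) (S : Finset V) (r : ℕ)
    (hk : 1 ≤ k) (hr2 : 2 ≤ r) (hn : 0 < Fintype.card V)
    (hclique : (AuxG G k hh Kr dr).CliqueFree r) :
    ((S.card : ℝ) * (minDeg G : ℝ)^k)^2 / ((Fintype.card V : ℝ) * ((r:ℝ) - 1)) ≤
    (Set.ncard {u : ℕ → V | PadSeq (2 * k) u ∧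
        (∀ s, s < 2 * k → G.Adj (u s) (u (s + 1))) ∧
        u 0 ∈ S ∧ u (2 * k) ∈ S ∧
        ∀ ℓ, 1 ≤ ℓ → ℓ ≤ k → ∀ i j, i < k → j < k →
          ¬ Rich G k hh Kr dr i j (u (k - ℓ)) (u (k + ℓ))} : ℝ) := by
  classical
  set PoorSet := {u : ℕ → V | PadSeq (2 * k) u ∧
        (∀ s, s < 2 * k → G.Adj (u s) (u (s + 1))) ∧
        u 0 ∈ S ∧ u (2 * k) ∈ S ∧
        ∀ ℓ, 1 ≤ ℓ → ℓ ≤ k → ∀ i j, i < k → j < k →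
          ¬ Rich G k hh Kr dr i j (u (k - ℓ)) (u (k + ℓ))} with hPoorSet
  set PoorT : Finset (Fin (2*k+1) → V) := univ.filter (fun w =>
    TWalk G (2*k) w ∧ tup w 0 ∈ S ∧ tup w (2*k) ∈ S ∧
    ∀ ℓ i j, 1 ≤ ℓ → ℓ ≤ k → i < k → j < k →
      ¬ Rich G k hh Kr dr i j (tup w (k - ℓ)) (tup w (k + ℓ))) with hPoorT
  set NAF : V → Finset ((Fin (k+1) → V) × (Fin (k+1) → V)) := fun v =>
    ((WES G k S v) ×ˢ (WES G k S v)).filter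
      (fun p => ¬ (AuxG G k hh Kr dr).Adj p.1 p.2) with hNAF
  -- Step 1: each NAF v maps into PoorT via glT, injectively, with disjoint images
  have hglmem : ∀ v, ∀ uu ∈ NAF v, glT uu ∈ PoorT := by
    intro v uu huu
    rw [hNAF, mem_filter, mem_product] at huu
    obtain ⟨⟨hu1, hu2⟩, hnadj⟩ := huu
    rw [WES, mem_filter] at hu1 hu2
    obtain ⟨_, hw1, hv1, hS1⟩ := hu1
    obtain ⟨_, hw2, hv2, hS2⟩ := hu2
    rw [hPoorT, mem_filter]
    refine ⟨mem_univ _, ?_, ?_, ?_, ?_⟩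
    · intro s hs
      rcases Nat.lt_or_ge (s+1) k with h | h
      · rw [tup_glT_le _ (by omega), tup_glT_le _ (by omega)]
        have := hw1 (k - s - 1) (by omega)
        have e1 : k - s - 1 + 1 = k - s := by omega
        have e2 : k - (s+1) = k - s - 1 := by omega
        rw [e1] at this
        rw [e2]
        exact this.symm
      · rcases Nat.lt_or_ge s k with h2 | h2
        · -- s + 1 = k
          have hsk : s + 1 = k := by omega
          rw [tup_glT_le _ (by omega), tup_glT_le _ (by omega)]
          have := hw1 (k - s - 1) (by omega)
          have e1 : k - s - 1 + 1 = k - s := by omega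
          have e2 : k - (s+1) = k - s - 1 := by omega
          rw [e1] at this
          rw [e2]
          exact this.symm
        · rcases Nat.lt_or_ge k (s+1) with h3 | h3
          · rcases Nat.lt_or_ge k s with h4 | h4
            · rw [tup_glT_gt _ h4 (by omega), tup_glT_gt _ (by omega) (by omega)]
              have := hw2 (s - k) (by omega)
              have e1 : s + 1 - k = (s - k) + 1 := by omega
              rw [e1]
              exact this
            · -- s = k
              have hsk : s = k := by omega
              rw [tup_glT_le _ (by omega), tup_glT_gt _ (by omega) (by omega)]
              have e1 : k - s = 0 := by omega
              have e2 : s + 1 - k = 1 := by omega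
              rw [e1, e2, hv1, ← hv2]
              exact hw2 0 (by omega)
          · omega
    · rw [tup_glT_le _ (by omega : 0 ≤ k)]
      simpa using hS1
    · rw [tup_glT_gt _ (by omega) (by omega)]
      have e1 : 2*k - k = k := by omega
      rw [e1]
      exact hS2
    · intro ℓ i j hℓ1 hℓ2 hi hj
      rw [tup_glT_le _ (by omega : k - ℓ ≤ k), tup_glT_gt _ (by omega) (by omega)]
      have e1 : k - (k - ℓ) = ℓ := by omega
      have e2 : k + ℓ - k = ℓ := by omega
      rw [e1, e2]
      intro hrich
      rcases eq_or_ne uu.1 uu.2 with he | he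
      · rw [he] at hrich
        exact hrich.1 rfl
      · exact hnadj ⟨he, ℓ, i, j, hℓ1, hℓ2, hi, hj, Or.inl hrich⟩
  have hglinj : ∀ v : V, Set.InjOn (glT (V := V) (k := k)) ((NAF v) : Set _) := by
    intro v uu huu uu' huu' heq
    rw [mem_coe, hNAF, mem_filter, mem_product] at huu huu'
    obtain ⟨⟨hu1, hu2⟩, _⟩ := huu
    obtain ⟨⟨hu1', hu2'⟩, _⟩ := huu'
    rw [WES, mem_filter] at hu1 hu2 hu1' hu2'
    have hcomp : ∀ s, s ≤ 2*k → tup (glT uu) s = tup (glT uu') s := by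
      intro s hs
      rw [heq]
    have e1 : uu.1 = uu'.1 := by
      apply tup_ext
      intro s hs
      have := hcomp (k - s) (by omega)
      rw [tup_glT_le _ (by omega), tup_glT_le _ (by omega)] at this
      have e : k - (k - s) = s := by omega
      rwa [e] at this
    have e2 : uu.2 = uu'.2 := by
      apply tup_ext
      intro s hs
      rcases Nat.eq_zero_or_pos s with h0 | h0
      · rw [h0]
        rw [hu2.2.2.1, hu2'.2.2.1]
      · have := hcomp (k + s) (by omega)
        rw [tup_glT_gt _ (by omega) (by omega), tup_glT_gt _ (by omega) (by omega)] at this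
        have e : k + s - k = s := by omega
        rwa [e] at this
    exact Prod.ext e1 e2
  have hgl_eq_v : ∀ v : V, ∀ uu ∈ NAF v, tup (glT uu) k = v := by
    intro v uu huu
    rw [hNAF, mem_filter, mem_product] at huu
    obtain ⟨⟨hu1, _⟩, _⟩ := huu
    rw [WES, mem_filter] at hu1
    rw [tup_glT_le _ (le_refl k), Nat.sub_self]
    exact hu1.2.2.1
  -- Step 2: sum of NAF cards is at most PoorT card
  have hsumpoor : ∑ v : V, (NAF v).card ≤ PoorT.card := by
    have himg : ∀ v : V, ((NAF v).image glT).card = (NAF v).card := by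
      intro v
      exact card_image_of_injOn (hglinj v)
    have hdisj : ∀ v ∈ (univ : Finset V), ∀ v' ∈ (univ : Finset V), v ≠ v' →
        Disjoint ((NAF v).image glT) ((NAF v').image glT) := by
      intro v _ v' _ hvv'
      rw [Finset.disjoint_left]
      intro w hw hw'
      obtain ⟨uu, huu, rfl⟩ := mem_image.mp hw
      obtain ⟨uu', huu', heq⟩ := mem_image.mp hw'
      apply hvv'
      rw [← hgl_eq_v v uu huu, ← hgl_eq_v v' uu' huu', heq]
    calc ∑ v : V, (NAF v).card = ∑ v : V, ((NAF v).image glT).card := by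
          apply sum_congr rfl
          intro v _
          exact (himg v).symm
      _ = ((univ : Finset V).biUnion (fun v => (NAF v).image glT)).card :=
          (card_biUnion hdisj).symm
      _ ≤ PoorT.card := by
          apply card_le_card
          intro w hw
          obtain ⟨v, _, hw2⟩ := mem_biUnion.mp hw
          obtain ⟨uu, huu, rfl⟩ := mem_image.mp hw2
          exact hglmem v uu huu
  -- Step 3: Turan bound for each v
  have hturan : ∀ v : V, ((WES G k S v).card : ℝ)^2 / ((r:ℝ) - 1) ≤ ((NAF v).card : ℝ) := by
    intro v
    exact nonadj_card (AuxG G k hh Kr dr) r hr2 hclique (WES G k S v)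
  -- Step 4: sum of WES cards is at least S.card * minDeg^k
  have hwalksum : (S.card : ℝ) * (minDeg G : ℝ)^k ≤ (∑ v : V, ((WES G k S v).card : ℝ)) := by
    have h1 : ∑ v : V, (WES G k S v).card =
        (univ.filter (fun q : Fin (k+1) → V => TWalk G k q ∧ tup q k ∈ S)).card := by
      rw [card_eq_sum_card_fiberwise (f := fun q => tup q 0) (t := (univ : Finset V))
        (fun q _ => mem_univ _)]
      apply sum_congr rfl
      intro v _
      congr 1
      ext q
      simp only [WES, mem_filter, mem_univ, true_and]
      tauto
    have h2 : S.card * (minDeg G)^k ≤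
        (univ.filter (fun q : Fin (k+1) → V => TWalk G k q ∧ tup q k ∈ S)).card := by
      rw [card_eq_sum_card_fiberwise (f := fun q => tup q k) (t := S)
        (fun q hq => (mem_filter.mp hq).2.2)]
      calc S.card * (minDeg G)^k = S.card • ((minDeg G)^k) := by rw [smul_eq_mul]
        _ ≤ _ := by
            apply card_nsmul_le_sum
            intro y hy
            have : WTo G k y ⊆ (univ.filter (fun q : Fin (k+1) → V =>
                TWalk G k q ∧ tup q k ∈ S)).filter (fun q => tup q k = y) := by
              intro q hq
              rw [mem_WTo] at hq
              rw [mem_filter, mem_filter]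
              refine ⟨⟨mem_univ _, hq.1, ?_⟩, hq.2⟩
              rw [hq.2]
              exact hy
            exact le_trans (card_WTo_ge G k y) (card_le_card this)
    calc (S.card : ℝ) * (minDeg G : ℝ)^k = ((S.card * (minDeg G)^k : ℕ) : ℝ) := by push_cast; ring
      _ ≤ ((univ.filter (fun q : Fin (k+1) → V => TWalk G k q ∧ tup q k ∈ S)).card : ℝ) := by
          exact_mod_cast h2
      _ = ∑ v : V, ((WES G k S v).card : ℝ) := by
          rw [← h1]
          push_cast
          rfl
  -- Step 5: Cauchy-Schwarz
  have hCS : (∑ v : V, ((WES G k S v).card : ℝ))^2 ≤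
      (Fintype.card V : ℝ) * ∑ v : V, ((WES G k S v).card : ℝ)^2 := by
    have := sum_mul_sq_le_sq_mul_sq (univ : Finset V) (fun _ => (1:ℝ))
      (fun v => ((WES G k S v).card : ℝ))
    simp only [one_mul, one_pow] at this
    calc (∑ v : V, ((WES G k S v).card : ℝ))^2 ≤
        (∑ _v : V, (1:ℝ)) * ∑ v : V, ((WES G k S v).card : ℝ)^2 := this
      _ = (Fintype.card V : ℝ) * ∑ v : V, ((WES G k S v).card : ℝ)^2 := by
          rw [sum_const, card_univ]
          simp
  -- Step 6: PoorT card ≤ ncard PoorSet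
  have hfinal_transfer : (PoorT.card : ℝ) ≤ (PoorSet.ncard : ℝ) := by
    have hextinj : Function.Injective (fun (w : Fin (2*k+1) → V) => (fun s => tup w s : ℕ → V)) := by
      intro w w' heq
      apply tup_ext
      intro s hs
      exact congrFun heq s
    have himgsub : (fun (w : Fin (2*k+1) → V) => (fun s => tup w s : ℕ → V)) '' ↑PoorT ⊆ PoorSet := by
      rintro u ⟨w, hw, rfl⟩
      rw [mem_coe, hPoorT, mem_filter] at hw
      obtain ⟨_, hwalk, hS0, hS2k, hpoor⟩ := hw
      rw [hPoorSet]
      refine ⟨?_, ?_, ?_, ?_, ?_⟩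
      · intro s hs
        simp only
        rw [tup_eq _ (le_refl (2*k))]
        unfold tup
        congr 1
        exact Fin.ext (by simp; omega)
      · intro s hs
        exact hwalk s hs
      · exact hS0
      · exact hS2k
      · intro ℓ h1 h2 i j hi hj
        exact hpoor ℓ i j h1 h2 hi hj
    have hPoorFin : PoorSet.Finite := by
      apply Set.Finite.subset (Set.finite_range
        (fun (w : Fin (2*k+1) → V) => (fun s => tup w s : ℕ → V)))
      intro u hu
      rw [hPoorSet] at hu
      refine ⟨fun a => u (a : ℕ), ?_⟩
      funext s
      show tup (fun a : Fin (2*k+1) => u (a:ℕ)) s = u s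
      rcases le_or_gt s (2*k) with h | h
      · rw [tup_mk (fun n => u n) h]
      · have h1 := hu.1 s (by omega)
        rw [h1]
        unfold tup
        have hm : min s (2*k) = 2*k := by omega
        simp [hm]
    calc (PoorT.card : ℝ) =
        ((((fun (w : Fin (2*k+1) → V) => (fun s => tup w s : ℕ → V)) '' ↑PoorT).ncard : ℕ) : ℝ) := by
          rw [Set.ncard_image_of_injective _ hextinj, Set.ncard_coe_finset]
      _ ≤ (PoorSet.ncard : ℝ) := by
          have := Set.ncard_le_ncard himgsub hPoorFin
          exact_mod_cast this
  -- Assemble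
  have hr1 : (0:ℝ) < (r:ℝ) - 1 := by
    have : (2:ℝ) ≤ (r:ℝ) := by exact_mod_cast hr2
    linarith
  have hn0 : (0:ℝ) < (Fintype.card V : ℝ) := by exact_mod_cast hn
  have step1 : ((S.card : ℝ) * (minDeg G : ℝ)^k)^2 / ((Fintype.card V : ℝ) * ((r:ℝ) - 1)) ≤
      (∑ v : V, ((WES G k S v).card : ℝ)^2) / ((r:ℝ) - 1) := by
    rw [div_le_div_iff₀ (by positivity) hr1]
    have hsq : ((S.card : ℝ) * (minDeg G : ℝ)^k)^2 ≤
        (∑ v : V, ((WES G k S v).card : ℝ))^2 := by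
      apply pow_le_pow_left₀ (by positivity) hwalksum
    calc ((S.card : ℝ) * (minDeg G : ℝ)^k)^2 * ((r:ℝ) - 1)
        ≤ (∑ v : V, ((WES G k S v).card : ℝ))^2 * ((r:ℝ) - 1) := by
          apply mul_le_mul_of_nonneg_right hsq (le_of_lt hr1)
      _ ≤ ((Fintype.card V : ℝ) * ∑ v : V, ((WES G k S v).card : ℝ)^2) * ((r:ℝ) - 1) := by
          apply mul_le_mul_of_nonneg_right hCS (le_of_lt hr1)
      _ = (∑ v : V, ((WES G k S v).card : ℝ)^2) * ((Fintype.card V : ℝ) * ((r:ℝ) - 1)) := by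
          ring
  have step2 : (∑ v : V, ((WES G k S v).card : ℝ)^2) / ((r:ℝ) - 1) ≤
      ∑ v : V, ((NAF v).card : ℝ) := by
    rw [div_le_iff₀ hr1]
    rw [sum_mul]
    apply sum_le_sum
    intro v _
    have := hturan v
    rw [div_le_iff₀ hr1] at this
    exact this
  have step3 : (∑ v : V, ((NAF v).card : ℝ)) ≤ (PoorT.card : ℝ) := by
    calc (∑ v : V, ((NAF v).card : ℝ)) = ((∑ v : V, (NAF v).card : ℕ) : ℝ) := by push_cast; rfl
      _ ≤ (PoorT.card : ℝ) := by exact_mod_cast hsumpoor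
  calc ((S.card : ℝ) * (minDeg G : ℝ)^k)^2 / ((Fintype.card V : ℝ) * ((r:ℝ) - 1))
      ≤ (∑ v : V, ((WES G k S v).card : ℝ)^2) / ((r:ℝ) - 1) := step1
    _ ≤ ∑ v : V, ((NAF v).card : ℝ) := step2
    _ ≤ (PoorT.card : ℝ) := step3
    _ ≤ (PoorSet.ncard : ℝ) := hfinal_transfer
end PF
end C8

end AuxLemmas

section MainProof
open Finset
open scoped Classical

/-- **Lemma 4.5.** Let `F` be a multigraph on `t` vertices, `H = F^{2k-1}`,
`r = R_k(t)`. If `G` is an `H`-free `K`-almost-regular graph on `n` vertices with minimum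
degree `δ > 0` and `S ⊆ V(G)` satisfies `|S| ≥ 2nr/δ^k`, then there are at least
`|S|²δ^{2k}/(4r²n)` tuples `(u_{-k}, …, u_k)` (indexed here by `u 0, …, u (2k)`) with both
endpoints in `S`, consecutive vertices adjacent, and `(u_{-ℓ}, u_ℓ)` `(i,j)`-poor for all
`1 ≤ ℓ ≤ k`, `0 ≤ i, j ≤ k-1`. -/
theorem many_poor_walks
    (t : ℕ) (m : Fin t → Fin t → ℕ)
    (hsymm : ∀ a b, m a b = m b a) (hirr : ∀ a, m a a = 0)
    (k K : ℕ) (hk : 1 ≤ k) (hK : 1 ≤ K)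
    (r : ℕ) (hr : RamseyProp k t r) (hrleast : ∀ r', RamseyProp k t r' → r ≤ r')
    (n : ℕ) (G : SimpleGraph (Fin n))
    (hHfree : ¬ ContainsMultiSubdiv G t m (2 * k))
    (hreg : maxDeg G ≤ K * minDeg G)
    (hδpos : 0 < minDeg G)
    (S : Finset (Fin n))
    (hS : 2 * (n : ℝ) * r / ((minDeg G : ℝ) ^ k) ≤ (S.card : ℝ)) :
    ((S.card : ℝ) ^ 2 * (minDeg G : ℝ) ^ (2 * k)) / (4 * (r : ℝ) ^ 2 * n) ≤
      (Set.ncard {u : ℕ → Fin n | PadSeq (2 * k) u ∧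
        (∀ s, s < 2 * k → G.Adj (u s) (u (s + 1))) ∧
        u 0 ∈ S ∧ u (2 * k) ∈ S ∧
        ∀ ℓ, 1 ≤ ℓ → ℓ ≤ k → ∀ i j, i < k → j < k →
          ¬ Rich G k (nH t k m) (K : ℝ) ((minDeg G : ℝ)) i j (u (k - ℓ)) (u (k + ℓ))} : ℝ) := by
  classical
  -- n > 0, else minDeg = 0
  rcases Nat.eq_zero_or_pos n with hn0 | hn0
  · exfalso
    subst hn0
    have hmd : minDeg G = 0 := by
      unfold minDeg
      convert Nat.sInf_empty
      ext d
      simp only [Set.mem_setOf_eq, Set.mem_empty_iff_false, iff_false]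
      rintro ⟨v, _⟩
      exact v.elim0
    omega
  -- t ≥ 2, else H-containment is trivial
  rcases Nat.lt_or_ge t 2 with ht2 | ht2
  · exfalso
    apply hHfree
    have ht01 : t = 0 ∨ t = 1 := by omega
    rcases ht01 with ht | ht
    · subst ht
      refine ⟨Fin.elim0, fun a => a.elim0, ?_, ?_, ?_, ?_⟩
      · intro a b _; exact a.elim0
      · intro a; exact a.elim0
      · intro a; exact a.elim0
      · intro a; exact a.elim0
    · subst ht
      refine ⟨fun _ => ⟨0, hn0⟩, fun a b c => fun _ => ⟨0, hn0⟩, ?_, ?_, ?_, ?_⟩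
      · intro a b _; exact Subsingleton.elim a b
      · intro a b hab
        exfalso
        rw [Fin.lt_def] at hab
        have := a.isLt; have := b.isLt
        omega
      · intro a b hab
        exfalso
        rw [Fin.lt_def] at hab
        have := a.isLt; have := b.isLt
        omega
      · intro a b hab
        exfalso
        rw [Fin.lt_def] at hab
        have := a.isLt; have := b.isLt
        omega
  have ht1 : 1 ≤ t := by omega
  -- r ≥ t ≥ 2
  have hr2 : 2 ≤ r := by
    obtain ⟨col, sF, hcard, _⟩ := hr (fun _ _ => (⟨0, hk⟩ : Fin k)) (fun _ _ => rfl)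
    have h1 : sF.card ≤ r := le_trans (card_le_card (subset_univ sF)) (by simp)
    omega
  have hmax : (maxDeg G : ℝ) ≤ (K : ℝ) * (minDeg G : ℝ) := by
    have := hreg
    exact_mod_cast this
  have hh1 : 1 ≤ nH t k m := by
    have : t ≤ nH t k m := Nat.le_add_right _ _
    omega
  have hhge : t + (2*k - 1) * (∑ p : Fin t × Fin t, if p.1 < p.2 then m p.1 p.2 else 0) ≤
      nH t k m := le_refl _
  have hCF := PF.auxG_cliqueFree G t m k (nH t k m) (K:ℝ) (minDeg G : ℝ)
    hmax hh1 hk ht1 hhge r hr hHfree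
  have hn' : 0 < Fintype.card (Fin n) := by simpa using hn0
  have hmc := PF.main_count G k (nH t k m) (K:ℝ) (minDeg G : ℝ) S r hk hr2 hn' hCF
  have hcardV : (Fintype.card (Fin n) : ℝ) = (n : ℝ) := by simp
  rw [hcardV] at hmc
  refine le_trans ?_ hmc
  have heq : ((S.card:ℝ) * ((minDeg G : ℝ))^k)^2 = (S.card:ℝ)^2 * (minDeg G : ℝ)^(2*k) := by
    rw [mul_pow, ← pow_mul, Nat.mul_comm k 2]
  rw [heq]
  have hrR : (2:ℝ) ≤ (r:ℝ) := by exact_mod_cast hr2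
  have hnR : (0:ℝ) < (n:ℝ) := by exact_mod_cast hn0
  have hrpos : (0:ℝ) < (r:ℝ) := by linarith
  have hr2p : (0:ℝ) < (r:ℝ)^2 := pow_pos hrpos 2
  have hd1 : (0:ℝ) < 4 * (r:ℝ)^2 * (n:ℝ) := by nlinarith [hr2p, hnR]
  have hd2 : (0:ℝ) < (n:ℝ) * ((r:ℝ) - 1) := mul_pos hnR (by linarith)
  rw [div_le_div_iff₀ hd1 hd2]
  have hnum : (0:ℝ) ≤ (S.card:ℝ)^2 * (minDeg G : ℝ)^(2*k) := by positivity
  have hden : (n:ℝ) * ((r:ℝ) - 1) ≤ 4 * (r:ℝ)^2 * (n:ℝ) := by nlinarith [hrR, hnR]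
  exact mul_le_mul_of_nonneg_left hden hnum

end MainProof
end
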